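/- arXiv:1507.01085 — 4 statements merged into one kernel-verified Lean document; each statement's English description precedes it below -/
import Mathlib

section
/- Let $m$ be a probability measure on $\mathbb{R}$ with CDF $F$, and for $n \geq 1$ let $\mu^n = \frac{1}{n}\sum_{k=1}^n \delta_{x_k}$ with $x_k = F^{-1}((2k-1)/(2n))$. If there exist $-\infty < a < b < +\infty$ with $m([a,b]) = 1$, then $W_1(m,\mu^n) \leq (b-a)/(2n)$. -/
open MeasureTheory Set
open scoped ENNReal

/-- The cumulative distribution function of a measure on `ℝ`. -/
noncomputable def cdfOf (m : Measure ℝ) (x : ℝ) : ℝ := (m (Iic x)).toReal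

/-- Pseudo-inverse of a CDF: `F⁻¹(v) = inf {x | F x ≥ v}`. -/
noncomputable def pinv (F : ℝ → ℝ) (v : ℝ) : ℝ := sInf {x | v ≤ F x}

/-- Optimal `n`-point quantization `μⁿ = (1/n) ∑ₖ δ_{F⁻¹((2k-1)/(2n))}`. -/
noncomputable def quant (m : Measure ℝ) (n : ℕ) : Measure ℝ :=
  ((n : ℝ≥0∞)⁻¹) • ∑ k ∈ Finset.Icc 1 n,
    Measure.dirac (pinv (cdfOf m) ((2 * (k : ℝ) - 1) / (2 * n)))

/-- Wasserstein-1 distance via pseudo-inverses of the CDFs. -/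
noncomputable def W1 (m m' : Measure ℝ) : ℝ :=
  ∫ v in Ioo (0 : ℝ) 1, |pinv (cdfOf m) v - pinv (cdfOf m') v|


lemma pinv_mono'' {F : ℝ → ℝ} {v w : ℝ} (h : v ≤ w)
    (hbdd : BddBelow {x | v ≤ F x}) (hne : {x | w ≤ F x}.Nonempty) :
    pinv F v ≤ pinv F w :=
  csInf_le_csInf hbdd hne (fun x hx => le_trans h hx)

lemma cdf_one {m : Measure ℝ} [IsProbabilityMeasure m] {a b : ℝ} (hm : m (Icc a b) = 1)
    {x : ℝ} (hx : b ≤ x) : cdfOf m x = 1 := by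
  have h1 : m (Iic x) = 1 := by
    refine le_antisymm prob_le_one ?_
    rw [← hm]; exact measure_mono (fun y hy => le_trans hy.2 hx)
  simp [cdfOf, h1]

lemma cdf_zero {m : Measure ℝ} [IsProbabilityMeasure m] {a b : ℝ} (hm : m (Icc a b) = 1)
    {x : ℝ} (hx : x < a) : cdfOf m x = 0 := by
  have hc : m (Icc a b)ᶜ = 0 := by
    rw [measure_compl measurableSet_Icc (measure_ne_top m _), hm, measure_univ, tsub_self]
  have h1 : m (Iic x) = 0 :=
    measure_mono_null (fun y hy => fun hy2 => absurd (le_trans hy2.1 hy) (not_le.2 hx)) hc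
  simp [cdfOf, h1]

section bounds
variable {m : Measure ℝ} [IsProbabilityMeasure m] {a b : ℝ} (hm : m (Icc a b) = 1)

lemma mem_lb (hm : m (Icc a b) = 1) {v : ℝ} (hv : 0 < v) {x : ℝ} (hx : v ≤ cdfOf m x) : a ≤ x := by
  by_contra hcon
  rw [cdf_zero hm (not_le.1 hcon)] at hx; linarith

lemma mem_b (hm : m (Icc a b) = 1) {v : ℝ} (hv : v ≤ 1) : v ≤ cdfOf m b := by
  rw [cdf_one hm le_rfl]; exact hv

lemma setne (hm : m (Icc a b) = 1) {v : ℝ} (hv : v ≤ 1) : {x | v ≤ cdfOf m x}.Nonempty :=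
  ⟨b, mem_b hm hv⟩

lemma setbdd (hm : m (Icc a b) = 1) {v : ℝ} (hv : 0 < v) : BddBelow {x | v ≤ cdfOf m x} :=
  ⟨a, fun x hx => mem_lb hm hv hx⟩

lemma pinv_ge_a (hm : m (Icc a b) = 1) {v : ℝ} (hv : 0 < v) (hv1 : v ≤ 1) :
    a ≤ pinv (cdfOf m) v :=
  le_csInf (setne hm hv1) (fun x hx => mem_lb hm hv hx)

lemma pinv_le_b (hm : m (Icc a b) = 1) {v : ℝ} (hv : 0 < v) (hv1 : v ≤ 1) :
    pinv (cdfOf m) v ≤ b :=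
  csInf_le (setbdd hm hv) (mem_b hm hv1)

lemma pinv_mono_m (hm : m (Icc a b) = 1) {v w : ℝ} (hv : 0 < v) (hvw : v ≤ w) (hw : w ≤ 1) :
    pinv (cdfOf m) v ≤ pinv (cdfOf m) w :=
  pinv_mono'' hvw (setbdd hm hv) (setne hm hw)

end bounds
lemma quant_cdf (m : Measure ℝ) (n : ℕ) (x : ℝ) :
    cdfOf (quant m n) x =
      (((Finset.Icc 1 n).filter
        (fun k : ℕ => pinv (cdfOf m) ((2 * (k : ℝ) - 1) / (2 * n)) ≤ x)).card : ℝ) / n := by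
  classical
  unfold cdfOf quant
  rw [Measure.smul_apply, Measure.finset_sum_apply]
  have : ∀ k ∈ Finset.Icc 1 n,
      (Measure.dirac (pinv (cdfOf m) ((2 * (k : ℝ) - 1) / (2 * n)))) (Iic x)
      = if pinv (cdfOf m) ((2 * (k : ℝ) - 1) / (2 * n)) ≤ x then 1 else 0 := by
    intro k _
    rw [Measure.dirac_apply' _ measurableSet_Iic]
    by_cases hk : pinv (cdfOf m) ((2 * (k : ℝ) - 1) / (2 * n)) ≤ x
    · simp [indicator, hk]
    · simp [indicator, hk]
  rw [Finset.sum_congr rfl this, Finset.sum_boole, smul_eq_mul]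
  rw [ENNReal.toReal_mul, ENNReal.toReal_inv, ENNReal.toReal_natCast, ENNReal.toReal_natCast, div_eq_inv_mul]
  rfl

lemma quant_pinv {m : Measure ℝ} [IsProbabilityMeasure m] {a b : ℝ}
    (hm : m (Icc a b) = 1) {n : ℕ} (hn : 1 ≤ n) {j : ℕ} (hj1 : 1 ≤ j) (hjn : j ≤ n)
    {v : ℝ} (hv1 : ((j : ℝ) - 1) / n < v) (hv2 : v ≤ (j : ℝ) / n) :
    pinv (cdfOf (quant m n)) v = pinv (cdfOf m) ((2 * (j : ℝ) - 1) / (2 * n)) := by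
  classical
  have hnR : (0 : ℝ) < n := by exact_mod_cast hn
  set xk : ℕ → ℝ := fun k => pinv (cdfOf m) ((2 * (k : ℝ) - 1) / (2 * n)) with hxk
  have xmono : ∀ k l : ℕ, 1 ≤ k → k ≤ l → l ≤ n → xk k ≤ xk l := by
    intro k l hk hkl hl
    have hk1 : (1:ℝ) ≤ (k:ℝ) := by exact_mod_cast hk
    have hk0 : (0 : ℝ) < (2 * (k : ℝ) - 1) / (2 * n) :=
      div_pos (by linarith) (by linarith)
    have hl1 : (2 * (l : ℝ) - 1) / (2 * n) ≤ 1 := by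
      rw [div_le_one (by linarith)]
      have : (l:ℝ) ≤ (n:ℝ) := by exact_mod_cast hl
      linarith
    have hklR : (k:ℝ) ≤ (l:ℝ) := by exact_mod_cast hkl
    exact pinv_mono_m hm hk0 (by gcongr) hl1
  have hset : {x | v ≤ cdfOf (quant m n) x} = Ici (xk j) := by
    ext x
    rw [mem_setOf_eq, quant_cdf, mem_Ici]
    set s := (Finset.Icc 1 n).filter
        (fun k : ℕ => pinv (cdfOf m) ((2 * (k : ℝ) - 1) / (2 * n)) ≤ x) with hs
    constructor
    · intro hx
      by_contra hcon
      push_neg at hcon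
      have hsub : s ⊆ Finset.Icc 1 (j - 1) := by
        intro k hk
        rw [hs, Finset.mem_filter, Finset.mem_Icc] at hk
        rw [Finset.mem_Icc]
        refine ⟨hk.1.1, ?_⟩
        by_contra hkj
        push_neg at hkj
        exact absurd (lt_of_le_of_lt hk.2 hcon) (not_lt.2 (xmono j k hj1 (by omega) hk.1.2))
      have hcard : s.card ≤ j - 1 :=
        le_trans (Finset.card_le_card hsub) (by rw [Nat.card_Icc]; omega)
      have hcR : (s.card : ℝ) ≤ (j : ℝ) - 1 := by
        have := (Nat.cast_le (α := ℝ)).2 hcard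
        rwa [Nat.cast_sub hj1, Nat.cast_one] at this
      have : v ≤ ((j : ℝ) - 1) / n := le_trans hx (by gcongr)
      linarith
    · intro hx
      have hsub : Finset.Icc 1 j ⊆ s := by
        intro k hk
        rw [Finset.mem_Icc] at hk
        rw [hs, Finset.mem_filter, Finset.mem_Icc]
        exact ⟨⟨hk.1, le_trans hk.2 hjn⟩, le_trans (xmono k j hk.1 hk.2 hjn) hx⟩
      have hcard : j ≤ s.card := by
        have := Finset.card_le_card hsub
        rwa [Nat.card_Icc, Nat.add_sub_cancel] at this
      have hcR : (j : ℝ) ≤ (s.card : ℝ) := by exact_mod_cast hcard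
      calc v ≤ (j : ℝ) / n := hv2
        _ ≤ (s.card : ℝ) / n := by gcongr
  rw [pinv, hset, csInf_Ici]

lemma shift_integral (G : ℝ → ℝ) {c d : ℝ} (hcd : c ≤ d) (t : ℝ) :
    ∫ v in Ioc c d, G (v + t) = ∫ v in Ioc (c + t) (d + t), G v := by
  rw [← intervalIntegral.integral_of_le hcd, ← intervalIntegral.integral_of_le (by linarith),
    intervalIntegral.integral_comp_add_right]

lemma tele (J : ℕ → ℝ) (n : ℕ) (hmono : ∀ i : ℕ, i + 1 ≤ 2 * n - 1 → J i ≤ J (i + 1)) :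
    ∀ M, M ≤ n → ∑ i ∈ Finset.range M, (J (2 * i + 1) - J (2 * i)) ≤ J (2 * M - 1) - J 0 := by
  intro M
  induction M with
  | zero => intro _; simp
  | succ M ih =>
    intro hM
    rw [Finset.sum_range_succ]
    have h1 : J (2 * M - 1) ≤ J (2 * M) := by
      rcases Nat.eq_zero_or_pos M with h | h
      · subst h; simp
      · have := hmono (2 * M - 1) (by omega)
        rwa [Nat.sub_add_cancel (by omega)] at this
    have h2 := ih (by omega)
    have h3 : 2 * (M + 1) - 1 = 2 * M + 1 := by omega
    rw [h3]
    linarith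

set_option maxHeartbeats 1000000 in
theorem stmt1 (m : Measure ℝ) [IsProbabilityMeasure m] (a b : ℝ) (hab : a < b)
    (hm : m (Icc a b) = 1) (n : ℕ) (hn : 1 ≤ n) :
    W1 m (quant m n) ≤ (b - a) / (2 * n) := by
  classical
  have hnR : (0 : ℝ) < n := by exact_mod_cast hn
  set N : ℝ := (n : ℝ) with hN
  set h : ℝ := 1 / (2 * N) with hh
  have hh0 : 0 < h := by rw [hh]; positivity
  have h2n : 2 * N * h = 1 := by rw [hh]; field_simp
  have hdiv : ∀ r : ℝ, r / N = 2 * r * h := by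
    intro r; rw [hh]; field_simp
  set G : ℝ → ℝ := pinv (cdfOf m) with hG
  have hGa : ∀ v ∈ Ioc (0:ℝ) 1, a ≤ G v := fun v hv => pinv_ge_a hm hv.1 hv.2
  have hGb : ∀ v ∈ Ioc (0:ℝ) 1, G v ≤ b := fun v hv => pinv_le_b hm hv.1 hv.2
  have hGmono : ∀ v w : ℝ, 0 < v → v ≤ w → w ≤ 1 → G v ≤ G w :=
    fun v w h1 h2 h3 => pinv_mono_m hm h1 h2 h3
  -- integrability of G on (0,1]
  have hGmeas : AEMeasurable G (volume.restrict (Ioc (0:ℝ) 1)) :=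
    aemeasurable_restrict_of_monotoneOn measurableSet_Ioc
      (fun v hv w hw hvw => hGmono v w hv.1 hvw hw.2)
  have hGint : IntegrableOn G (Ioc (0:ℝ) 1) := by
    refine Integrable.mono' (g := fun _ => max |a| |b|)
      (integrableOn_const (s := Ioc (0:ℝ) 1) (μ := volume) (C := max |a| |b|) (by rw [Real.volume_Ioc]; exact ENNReal.ofReal_ne_top))
      hGmeas.aestronglyMeasurable ?_
    refine (ae_restrict_iff' measurableSet_Ioc).2 (ae_of_all _ (fun v hv => ?_))
    exact abs_le_max_abs_abs (hGa v hv) (hGb v hv)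
  -- the dyadic pieces
  set J : ℕ → ℝ := fun i => ∫ v in Ioc ((i:ℝ) * h) ((i:ℝ) * h + h), G v with hJ
  have hsub : ∀ x y : ℝ, 0 ≤ x → y ≤ 1 → Ioc x y ⊆ Ioc (0:ℝ) 1 :=
    fun x y hx hy v hv => ⟨lt_of_le_of_lt hx hv.1, le_trans hv.2 hy⟩
  -- J is monotone within (0,1]
  have hJmono : ∀ i : ℕ, (i:ℝ) * h + 2 * h ≤ 1 → J i ≤ J (i + 1) := by
    intro i hi
    have hi0 : 0 ≤ (i:ℝ) * h := by positivity
    have hint1 : IntegrableOn G (Ioc ((i:ℝ) * h) ((i:ℝ) * h + h)) :=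
      hGint.mono_set (hsub _ _ hi0 (by linarith))
    have hint2 : IntegrableOn G (Ioc ((i:ℝ) * h + h) ((i:ℝ) * h + h + h)) :=
      hGint.mono_set (hsub _ _ (by linarith) (by linarith))
    have hint3 : IntegrableOn (fun v => G (v + h)) (Ioc ((i:ℝ) * h) ((i:ℝ) * h + h)) := by
      have h1 : IntervalIntegrable G volume ((i:ℝ) * h + h) ((i:ℝ) * h + h + h) :=
        (intervalIntegrable_iff_integrableOn_Ioc_of_le (by linarith)).2 hint2
      have h2 := h1.comp_add_right h
      have e1 : (i:ℝ) * h + h - h = (i:ℝ) * h := by ring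
      have e2 : (i:ℝ) * h + h + h - h = (i:ℝ) * h + h := by ring
      rw [e1, e2] at h2
      exact (intervalIntegrable_iff_integrableOn_Ioc_of_le (by linarith)).1 h2
    have hshift : ∫ v in Ioc ((i:ℝ) * h) ((i:ℝ) * h + h), G (v + h)
        = ∫ v in Ioc ((i:ℝ) * h + h) ((i:ℝ) * h + h + h), G v := by
      rw [shift_integral G (by linarith : (i:ℝ) * h ≤ (i:ℝ) * h + h) h]
    have hcomp : J i ≤ ∫ v in Ioc ((i:ℝ) * h) ((i:ℝ) * h + h), G (v + h) := by
      refine setIntegral_mono_on hint1 hint3 measurableSet_Ioc (fun v hv => ?_)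
      exact hGmono v (v + h) (lt_of_le_of_lt hi0 hv.1) (by linarith) (by linarith [hv.2])
    have hJi1 : J (i + 1) = ∫ v in Ioc ((i:ℝ) * h + h) ((i:ℝ) * h + h + h), G v := by
      have e : ((i + 1 : ℕ) : ℝ) * h = (i:ℝ) * h + h := by push_cast; ring
      simp only [hJ, e]
    rw [hJi1]
    exact le_trans hcomp (le_of_eq hshift)
  -- endpoint bounds
  have hN1 : (1:ℝ) ≤ N := by rw [hN]; exact_mod_cast hn
  have hh1 : h ≤ 1 := by nlinarith
  have hconst : ∀ (x y c : ℝ), IntegrableOn (fun _ : ℝ => c) (Ioc x y) := fun x y c =>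
    integrableOn_const (by rw [Real.volume_Ioc]; exact ENNReal.ofReal_ne_top)
  have hJ0 : a * h ≤ J 0 := by
    have e : J 0 = ∫ v in Ioc (0:ℝ) (0 + h), G v := by
      simp only [hJ, Nat.cast_zero, zero_mul]
    rw [e]
    have hss : Ioc (0:ℝ) (0 + h) ⊆ Ioc (0:ℝ) 1 := hsub _ _ le_rfl (by linarith)
    have hint : IntegrableOn G (Ioc (0:ℝ) (0 + h)) := hGint.mono_set hss
    have evol : (volume (Ioc (0:ℝ) (0 + h))).toReal = h := by
      rw [Real.volume_Ioc, ENNReal.toReal_ofReal (by linarith)]; ring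
    calc a * h = (volume (Ioc (0:ℝ) (0 + h))).toReal • a := by rw [evol, smul_eq_mul]; ring
      _ = ∫ _ in Ioc (0:ℝ) (0 + h), a := (setIntegral_const a).symm
      _ ≤ ∫ v in Ioc (0:ℝ) (0 + h), G v :=
          setIntegral_mono_on (hconst _ _ _) hint measurableSet_Ioc (fun v hv => hGa v (hss hv))
  have hJlast : J (2 * n - 1) ≤ b * h := by
    have ec : ((2 * n - 1 : ℕ) : ℝ) = 2 * N - 1 := by
      rw [Nat.cast_sub (by omega)]; push_cast; ring
    have e : J (2 * n - 1) = ∫ v in Ioc ((2 * N - 1) * h) ((2 * N - 1) * h + h), G v := by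
      simp only [hJ, ec]
    rw [e]
    have hlb : 0 ≤ (2 * N - 1) * h := by nlinarith
    have hub : (2 * N - 1) * h + h ≤ 1 := by nlinarith [h2n]
    have hss : Ioc ((2 * N - 1) * h) ((2 * N - 1) * h + h) ⊆ Ioc (0:ℝ) 1 := hsub _ _ hlb hub
    have hint : IntegrableOn G (Ioc ((2 * N - 1) * h) ((2 * N - 1) * h + h)) := hGint.mono_set hss
    have evol : (volume (Ioc ((2 * N - 1) * h) ((2 * N - 1) * h + h))).toReal = h := by
      rw [Real.volume_Ioc, ENNReal.toReal_ofReal (by linarith)]; ring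
    calc ∫ v in Ioc ((2 * N - 1) * h) ((2 * N - 1) * h + h), G v
        ≤ ∫ _ in Ioc ((2 * N - 1) * h) ((2 * N - 1) * h + h), b :=
          setIntegral_mono_on hint (hconst _ _ _) measurableSet_Ioc (fun v hv => hGb v (hss hv))
      _ = b * h := by rw [setIntegral_const, measureReal_def, evol, smul_eq_mul, mul_comm]
  -- covering of (0,1] by the n intervals
  set s : ℕ → Set ℝ := fun i => Ioc (2 * (i:ℝ) * h) (2 * (i:ℝ) * h + 2 * h) with hs
  have hcover : Ioc (0:ℝ) 1 = ⋃ i ∈ Finset.range n, s i := by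
    ext v
    simp only [hs, mem_Ioc, mem_iUnion, Finset.mem_range, exists_prop]
    constructor
    · rintro ⟨hv0, hv1⟩
      have hvN : 0 < v * N := by positivity
      set j := ⌈v * N⌉₊ with hj
      have hj1 : 1 ≤ j := Nat.ceil_pos.2 hvN
      have hjn : j ≤ n := Nat.ceil_le.2 (by nlinarith)
      have hcast : ((j - 1 : ℕ) : ℝ) = (j : ℝ) - 1 := by
        rw [Nat.cast_sub hj1, Nat.cast_one]
      have hjlt : (j : ℝ) < v * N + 1 := by
        exact_mod_cast Nat.ceil_lt_add_one (le_of_lt hvN)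
      have hjge : v * N ≤ (j : ℝ) := Nat.le_ceil _
      refine ⟨j - 1, by omega, ?_, ?_⟩
      · rw [hcast, ← hdiv, div_lt_iff₀ hnR]; linarith
      · rw [hcast]
        have h2 : v ≤ (j : ℝ) / N := (le_div_iff₀ hnR).2 hjge
        rw [hdiv] at h2
        have e : 2 * ((j : ℝ) - 1) * h + 2 * h = 2 * (j : ℝ) * h := by ring
        linarith [e]
    · rintro ⟨i, hin, h1, h2⟩
      have hi0 : 0 ≤ 2 * (i : ℝ) * h := by positivity
      have hiN : (i : ℝ) + 1 ≤ N := by rw [hN]; exact_mod_cast Nat.succ_le_of_lt hin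
      constructor
      · linarith
      · nlinarith [h2n]
  have hq : ∀ i < n, ∀ v ∈ s i,
      pinv (cdfOf (quant m n)) v = G ((2 * ((i + 1 : ℕ) : ℝ) - 1) / (2 * N)) := by
    intro i hi v hv
    rw [hs] at hv
    have hv1 : (((i + 1 : ℕ) : ℝ) - 1) / N < v := by
      rw [hdiv]
      have e : 2 * (((i + 1 : ℕ) : ℝ) - 1) * h = 2 * (i : ℝ) * h := by push_cast; ring
      rw [e]; exact hv.1
    have hv2 : v ≤ ((i + 1 : ℕ) : ℝ) / N := by
      rw [hdiv]
      have e : 2 * ((i + 1 : ℕ) : ℝ) * h = 2 * (i : ℝ) * h + 2 * h := by push_cast; ring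
      rw [e]; exact hv.2
    exact quant_pinv hm hn (by omega) (by omega) hv1 hv2
  have hpiece : ∀ i < n,
      ∫ v in s i, |G v - pinv (cdfOf (quant m n)) v| = J (2 * i + 1) - J (2 * i) := by
    intro i hi
    have hiN : (i : ℝ) + 1 ≤ N := by rw [hN]; exact_mod_cast Nat.succ_le_of_lt hi
    set α := 2 * (i : ℝ) * h with hα
    have hα0 : 0 ≤ α := by rw [hα]; positivity
    have hγ1 : α + 2 * h ≤ 1 := by rw [hα]; nlinarith [h2n]
    set ci := G ((2 * ((i + 1 : ℕ) : ℝ) - 1) / (2 * N)) with hci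
    have hcieq : (2 * ((i + 1 : ℕ) : ℝ) - 1) / (2 * N) = α + h := by
      rw [hα, hh]; push_cast; field_simp; ring
    have hmid : 0 < α + h := by linarith
    have hciL : ∀ v ∈ Ioc α (α + h), G v ≤ ci := by
      intro v hv
      rw [hci, hcieq]
      exact hGmono v (α + h) (lt_of_le_of_lt hα0 hv.1) hv.2 (by linarith)
    have hciR : ∀ v ∈ Ioc (α + h) (α + 2 * h), ci ≤ G v := by
      intro v hv
      rw [hci, hcieq]
      exact hGmono (α + h) v hmid (le_of_lt hv.1) (by linarith [hv.2])
    have hint1 : IntegrableOn G (Ioc α (α + h)) := hGint.mono_set (hsub _ _ hα0 (by linarith))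
    have hint2 : IntegrableOn G (Ioc (α + h) (α + 2 * h)) :=
      hGint.mono_set (hsub _ _ (by linarith) hγ1)
    have e1 : ∫ v in s i, |G v - pinv (cdfOf (quant m n)) v| = ∫ v in s i, |G v - ci| :=
      setIntegral_congr_fun measurableSet_Ioc (fun v hv => by rw [hq i hi v hv, hci])
    rw [e1]
    have hsplit : s i = Ioc α (α + h) ∪ Ioc (α + h) (α + 2 * h) := by
      rw [hs, Ioc_union_Ioc_eq_Ioc (by linarith) (by linarith)]
    have habs : IntegrableOn (fun v => |G v - ci|) (Ioc α (α + h)) :=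
      (hint1.sub (hconst _ _ _)).abs
    have habs2 : IntegrableOn (fun v => |G v - ci|) (Ioc (α + h) (α + 2 * h)) :=
      (hint2.sub (hconst _ _ _)).abs
    rw [hsplit, setIntegral_union
      (by rw [Set.Ioc_disjoint_Ioc]; exact le_trans (min_le_left _ _) (le_max_right _ _))
      measurableSet_Ioc habs habs2]
    have evol1 : (volume (Ioc α (α + h))).toReal = h := by
      rw [Real.volume_Ioc, ENNReal.toReal_ofReal (by linarith)]; ring
    have evol2 : (volume (Ioc (α + h) (α + 2 * h))).toReal = h := by
      rw [Real.volume_Ioc, ENNReal.toReal_ofReal (by linarith)]; ring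
    have eJ1 : J (2 * i) = ∫ v in Ioc α (α + h), G v := by
      simp only [hJ]
      rw [show ((2 * i : ℕ) : ℝ) * h = α by rw [hα]; push_cast; ring]
    have eJ2 : J (2 * i + 1) = ∫ v in Ioc (α + h) (α + 2 * h), G v := by
      simp only [hJ]
      rw [show ((2 * i + 1 : ℕ) : ℝ) * h = α + h by rw [hα]; push_cast; ring,
        show α + h + h = α + 2 * h by ring]
    have eL : ∫ v in Ioc α (α + h), |G v - ci| = ci * h - J (2 * i) := by
      rw [setIntegral_congr_fun (g := fun v => ci - G v) measurableSet_Ioc (fun v hv => by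
        rw [abs_of_nonpos (by linarith [hciL v hv]), neg_sub])]
      rw [integral_sub (hconst _ _ ci) hint1, setIntegral_const, measureReal_def, evol1, smul_eq_mul, eJ1]
      ring
    have eR : ∫ v in Ioc (α + h) (α + 2 * h), |G v - ci| = J (2 * i + 1) - ci * h := by
      rw [setIntegral_congr_fun (g := fun v => G v - ci) measurableSet_Ioc (fun v hv => by
        rw [abs_of_nonneg (by linarith [hciR v hv])])]
      rw [integral_sub hint2 (hconst _ _ ci), setIntegral_const, measureReal_def, evol2, smul_eq_mul, eJ2]
      ring
    rw [eL, eR]; ring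
  have hint_s : ∀ i ∈ Finset.range n,
      IntegrableOn (fun v => |G v - pinv (cdfOf (quant m n)) v|) (s i) := by
    intro i hi'
    have hi := Finset.mem_range.1 hi'
    have hiN : (i : ℝ) + 1 ≤ N := by rw [hN]; exact_mod_cast Nat.succ_le_of_lt hi
    have hsubi : s i ⊆ Ioc (0:ℝ) 1 := by
      rw [hs]; exact hsub _ _ (by positivity) (by nlinarith [h2n])
    have hint : IntegrableOn G (s i) := hGint.mono_set hsubi
    refine IntegrableOn.congr_fun
      ((hint.sub (g := fun _ => G ((2 * ((i + 1 : ℕ) : ℝ) - 1) / (2 * N))) ?_).abs)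
      (fun v hv => by rw [hq i hi v hv]; simp [Pi.sub_apply]) measurableSet_Ioc
    rw [hs]
    exact hconst _ _ _
  have hdisj : (↑(Finset.range n) : Set ℕ).Pairwise (Function.onFun Disjoint s) := by
    have key : ∀ p q : ℕ, p < q → Disjoint (s p) (s q) := by
      intro p q hpq
      rw [hs]
      simp only [Function.onFun]
      rw [Set.Ioc_disjoint_Ioc]
      have hpq' : (p : ℝ) + 1 ≤ (q : ℝ) := by exact_mod_cast hpq
      have e : 2 * (p : ℝ) * h + 2 * h ≤ 2 * (q : ℝ) * h := by nlinarith
      exact le_trans (min_le_left _ _) (le_trans e (le_max_right _ _))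
    intro i _ j _ hij
    rcases lt_or_gt_of_ne hij with hlt | hgt
    · exact key i j hlt
    · exact (key j i hgt).symm
  have hW : W1 m (quant m n) = ∑ i ∈ Finset.range n, (J (2 * i + 1) - J (2 * i)) := by
    rw [W1]
    rw [setIntegral_congr_set Ioo_ae_eq_Ioc]
    rw [hcover, integral_biUnion_finset _ (fun i _ => measurableSet_Ioc) hdisj hint_s]
    exact Finset.sum_congr rfl (fun i hi => hpiece i (Finset.mem_range.1 hi))
  have htel : ∑ i ∈ Finset.range n, (J (2 * i + 1) - J (2 * i)) ≤ J (2 * n - 1) - J 0 := by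
    refine tele J n (fun i hi => hJmono i ?_) n le_rfl
    have h1 : (i:ℝ) + 2 ≤ 2 * N := by rw [hN]; exact_mod_cast (by omega : i + 2 ≤ 2 * n)
    nlinarith [mul_le_mul_of_nonneg_right h1 (le_of_lt hh0), h2n]
  rw [hW]
  calc ∑ i ∈ Finset.range n, (J (2 * i + 1) - J (2 * i))
      ≤ J (2 * n - 1) - J 0 := htel
    _ ≤ b * h - a * h := by linarith
    _ = (b - a) / (2 * N) := by rw [hh]; ring
end

section
/- Let $m$ be a probability measure on $\mathbb{R}$ with CDF $F$, and for $n \geq 1$ let $\mu^n = \frac{1}{n}\sum_{k=1}^n \delta_{x_k}$ with $x_k = F^{-1}((2k-1)/(2n))$. Then $W_1(m,\mu^n) \leq \frac{1}{\sqrt{n}} \int_{\mathbb{R}} \sqrt{F(x)(1-F(x))}\,dx$, where the right-hand side may be infinite. -/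
open MeasureTheory Set ProbabilityTheory Filter Topology
open scoped ENNReal

/-- Wasserstein-1 distance as the `L¹` distance between the CDFs
(here expressed in `ℝ≥0∞` so that it may be infinite). -/
noncomputable def W1e (m m' : Measure ℝ) : ℝ≥0∞ :=
  ∫⁻ x, ENNReal.ofReal |cdfOf m x - cdfOf m' x|

lemma cdfOf_eq (m : Measure ℝ) [IsProbabilityMeasure m] : cdfOf m = ⇑(cdf m) := by
  funext x
  rw [cdfOf, cdf_eq_real, measureReal_def]

lemma pinv_le_iff (m : Measure ℝ) [IsProbabilityMeasure m] {v : ℝ} (h0 : 0 < v) (h1 : v < 1)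
    (x : ℝ) : pinv (cdfOf m) v ≤ x ↔ v ≤ cdfOf m x := by
  rw [cdfOf_eq]
  have hmono : Monotone (cdf m) := monotone_cdf m
  obtain ⟨a, ha⟩ : ∃ a, v ≤ cdf m a :=
    ((tendsto_cdf_atTop (μ := m)).eventually_const_le h1).exists
  obtain ⟨b, hb⟩ : ∃ b, cdf m b < v :=
    ((tendsto_cdf_atBot (μ := m)).eventually_lt_const h0).exists
  set S : Set ℝ := {y | v ≤ cdf m y} with hS
  have hSne : S.Nonempty := ⟨a, ha⟩
  have hbdd : BddBelow S := by
    refine ⟨b, fun y hy => ?_⟩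
    by_contra h
    push_neg at h
    exact absurd (le_trans hy (hmono h.le)) (not_le.2 hb)
  have hmem : v ≤ cdf m (sInf S) := by
    have hcont : ContinuousWithinAt (cdf m) (Ioi (sInf S)) (sInf S) :=
      ((cdf m).right_continuous (sInf S)).mono Ioi_subset_Ici_self
    refine ge_of_tendsto hcont ?_
    filter_upwards [self_mem_nhdsWithin] with y hy
    obtain ⟨s, hs, hsy⟩ := exists_lt_of_csInf_lt hSne hy
    exact le_trans hs (hmono hsy.le)
  show sInf S ≤ x ↔ v ≤ cdf m x
  constructor
  · intro h
    exact le_trans hmem (hmono h)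
  · intro h
    exact csInf_le hbdd h

theorem stmt2 (m : Measure ℝ) [IsProbabilityMeasure m] (n : ℕ) (hn : 1 ≤ n) :
    W1e m (quant m n) ≤
      ENNReal.ofReal (1 / Real.sqrt n) *
        ∫⁻ x, ENNReal.ofReal (Real.sqrt (cdfOf m x * (1 - cdfOf m x))) := by
  classical
  have hn0 : (0 : ℝ) < n := by exact_mod_cast hn
  have hkey : ∀ x : ℝ, |cdfOf m x - cdfOf (quant m n) x| ≤
      1 / Real.sqrt n * Real.sqrt (cdfOf m x * (1 - cdfOf m x)) := by
    intro x
    set t := cdfOf m x with ht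
    have ht0 : 0 ≤ t := ENNReal.toReal_nonneg
    have ht1 : t ≤ 1 := by
      rw [ht, cdfOf_eq]; exact cdf_le_one m x
    set P : ℕ → Prop := fun k => (2 * (k : ℝ) - 1) / (2 * (n : ℝ)) ≤ t with hP
    set c := ((Finset.Icc 1 n).filter P).card with hc
    -- Step A: the cdf of the quantized measure
    have hquant : cdfOf (quant m n) x = (c : ℝ) / n := by
      have hmeas : quant m n (Iic x) = (n : ℝ≥0∞)⁻¹ * (c : ℝ≥0∞) := by
        rw [quant, Measure.smul_apply, smul_eq_mul]
        congr 1
        rw [Measure.finset_sum_apply]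
        have hterm : ∀ k ∈ Finset.Icc 1 n,
            (Measure.dirac (pinv (cdfOf m) ((2 * (k : ℝ) - 1) / (2 * (n : ℝ))))) (Iic x)
              = if P k then 1 else 0 := by
          intro k hk
          simp only [Finset.mem_Icc] at hk
          have hk1 : (1 : ℝ) ≤ k := by exact_mod_cast hk.1
          have hkn : (k : ℝ) ≤ n := by exact_mod_cast hk.2
          have h0v : 0 < (2 * (k : ℝ) - 1) / (2 * (n : ℝ)) := by
            apply div_pos <;> linarith
          have h1v : (2 * (k : ℝ) - 1) / (2 * (n : ℝ)) < 1 := by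
            rw [div_lt_one (by linarith)]; linarith
          rw [Measure.dirac_apply' _ measurableSet_Iic]
          by_cases hp : P k
          · have := (pinv_le_iff m h0v h1v x).2 hp
            simp [indicator, mem_Iic, this, hp]
          · have hnle : ¬ pinv (cdfOf m) ((2 * (k : ℝ) - 1) / (2 * (n : ℝ))) ≤ x :=
              fun h => hp ((pinv_le_iff m h0v h1v x).1 h)
            simp [indicator, mem_Iic, hnle, hp]
        rw [Finset.sum_congr rfl hterm, Finset.sum_boole]
      rw [cdfOf, hmeas, ENNReal.toReal_mul, ENNReal.toReal_inv]
      simp [inv_mul_eq_div]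
    -- Step B: combinatorial facts about c
    have hcard_le : c ≤ n := by
      refine le_trans (Finset.card_filter_le _ _) ?_
      simp [Nat.card_Icc]
    have hc1 : 1 ≤ c → (2 * (c : ℝ) - 1) / (2 * (n : ℝ)) ≤ t := by
      intro hcge
      by_contra hlt
      push_neg at hlt
      have hsub : (Finset.Icc 1 n).filter P ⊆ Finset.Icc 1 (c - 1) := by
        intro k hk
        simp only [Finset.mem_filter, Finset.mem_Icc] at hk ⊢
        refine ⟨hk.1.1, ?_⟩
        by_contra hkc
        push_neg at hkc
        have hck : (c : ℝ) ≤ k := by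
          have : c ≤ k := by omega
          exact_mod_cast this
        have hmono : (2 * (c : ℝ) - 1) / (2 * (n : ℝ)) ≤ (2 * (k : ℝ) - 1) / (2 * (n : ℝ)) := by
          gcongr
        have := hk.2
        rw [hP] at this
        linarith
      have hcard := Finset.card_le_card hsub
      rw [Nat.card_Icc] at hcard
      omega
    have hc2 : c < n → t < (2 * (c : ℝ) + 1) / (2 * (n : ℝ)) := by
      intro hcn
      by_contra hge
      push_neg at hge
      have hsub : Finset.Icc 1 (c + 1) ⊆ (Finset.Icc 1 n).filter P := by
        intro k hk
        simp only [Finset.mem_Icc] at hk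
        simp only [Finset.mem_filter, Finset.mem_Icc]
        refine ⟨⟨hk.1, by omega⟩, ?_⟩
        show (2 * (k : ℝ) - 1) / (2 * (n : ℝ)) ≤ t
        have hk' : (k : ℝ) ≤ (c : ℝ) + 1 := by exact_mod_cast hk.2
        have hmono : (2 * (k : ℝ) - 1) / (2 * (n : ℝ)) ≤ (2 * (c : ℝ) + 1) / (2 * (n : ℝ)) := by
          gcongr <;> linarith
        linarith
      have hcard := Finset.card_le_card hsub
      rw [Nat.card_Icc] at hcard
      omega
    -- Step C: the three elementary bounds on d = |t - c/n|
    set Q : ℝ := (c : ℝ) / n with hQ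
    have hQ0 : 0 ≤ Q := by positivity
    have hQ1 : Q ≤ 1 := by
      rw [hQ, div_le_one hn0]; exact_mod_cast hcard_le
    have hbounds : |t - Q| ≤ 1 / (2 * n) ∧ |t - Q| ≤ t ∧ |t - Q| ≤ 1 - t := by
      rcases le_or_gt t Q with h | h
      · rw [abs_of_nonpos (by linarith)]
        rcases Nat.eq_zero_or_pos c with hc0 | hcp
        · have hQz : Q = 0 := by simp [hQ, hc0]
          have ht00 : t = 0 := le_antisymm (by rw [← hQz]; exact h) ht0
          have h1n : (0 : ℝ) ≤ 1 / (2 * (n : ℝ)) := by positivity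
          exact ⟨by rw [hQz, ht00]; simpa using h1n,
            by rw [hQz, ht00]; norm_num,
            by rw [hQz, ht00]; norm_num⟩
        · have h1 := hc1 hcp
          have hcR : (1 : ℝ) ≤ c := by exact_mod_cast hcp
          have e1 : (c : ℝ) / n - (2 * (c : ℝ) - 1) / (2 * n) = 1 / (2 * n) := by
            field_simp; ring
          have e2 : 1 / (2 * (n : ℝ)) ≤ (2 * (c : ℝ) - 1) / (2 * n) := by
            gcongr; linarith
          refine ⟨by rw [hQ] at *; linarith, by rw [hQ] at *; linarith, by linarith⟩
      · rw [abs_of_pos (by linarith)]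
        have hcn : c < n := by
          by_contra hge
          push_neg at hge
          have : c = n := le_antisymm hcard_le hge
          have : Q = 1 := by
            rw [hQ, this, div_self (ne_of_gt hn0)]
          linarith
        have h2 := hc2 hcn
        have hcR : (c : ℝ) ≤ (n : ℝ) - 1 := by
          have : c + 1 ≤ n := hcn
          have : (c : ℝ) + 1 ≤ n := by exact_mod_cast this
          linarith
        have e1 : (2 * (c : ℝ) + 1) / (2 * n) - (c : ℝ) / n = 1 / (2 * n) := by
          field_simp; ring
        have e2 : (2 * (c : ℝ) + 1) / (2 * n) + 1 / (2 * n) ≤ 1 := by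
          rw [← add_div, div_le_one (by linarith)]
          linarith
        refine ⟨by rw [hQ] at *; linarith, by linarith, by linarith⟩
    obtain ⟨hb1, hb2, hb3⟩ := hbounds
    have hd0 : 0 ≤ |t - Q| := abs_nonneg _
    -- conclude via squaring
    have hsn : 0 < Real.sqrt n := Real.sqrt_pos.2 hn0
    rw [hquant, one_div, inv_mul_eq_div, le_div_iff₀ hsn]
    rw [Real.le_sqrt (by positivity) (by nlinarith)]
    have hsq : Real.sqrt (n : ℝ) ^ 2 = (n : ℝ) := Real.sq_sqrt hn0.le
    rw [mul_pow, hsq]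
    -- n * d^2 ≤ t * (1 - t)
    have h1' : |t - Q| * (2 * n) ≤ 1 := by
      rw [← le_div_iff₀ (by positivity)]
      exact hb1
    have A : |t - Q| * (2 * n) * |t - Q| ≤ 1 * |t - Q| :=
      mul_le_mul_of_nonneg_right h1' hd0
    have B : 0 ≤ (t - |t - Q|) * (1 - t - |t - Q|) :=
      mul_nonneg (by linarith) (by linarith)
    have C : 2 * |t - Q| ≤ 1 := by linarith
    have D : 2 * |t - Q| * |t - Q| ≤ 1 * |t - Q| :=
      mul_le_mul_of_nonneg_right C hd0
    nlinarith [A, B, C, D, hd0]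
  rw [W1e]
  calc ∫⁻ x, ENNReal.ofReal |cdfOf m x - cdfOf (quant m n) x|
      ≤ ∫⁻ x, ENNReal.ofReal (1 / Real.sqrt n * Real.sqrt (cdfOf m x * (1 - cdfOf m x))) := by
        apply lintegral_mono
        intro x
        exact ENNReal.ofReal_le_ofReal (hkey x)
    _ = ENNReal.ofReal (1 / Real.sqrt n) *
        ∫⁻ x, ENNReal.ofReal (Real.sqrt (cdfOf m x * (1 - cdfOf m x))) := by
        simp_rw [ENNReal.ofReal_mul (by positivity : (0:ℝ) ≤ 1 / Real.sqrt n)]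
        rw [lintegral_const_mul' _ _ ENNReal.ofReal_ne_top]
end

section
/- Let $F(x) = \mathbf{1}_{x>0}(1 - e^{-x^{\alpha}})$ with $\alpha > 0$ be the CDF of a Weibull-type distribution $m$, and let $\mu^n = \frac{1}{n}\sum_{k=1}^n \delta_{F^{-1}((2k-1)/(2n))}$. Then $W_1(m,\mu^n) = \mathcal{O}((\log n)^{1/\alpha}/n)$ as $n \to +\infty$. -/
open MeasureTheory Set Filter
open scoped ENNReal

namespace Stmt14Aux

/-- the explicit quantile function -/
noncomputable def g (β : ℝ) (u : ℝ) : ℝ := (-Real.log (1 - u)) ^ β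

lemma neglog_nonneg {u : ℝ} (h0 : 0 ≤ u) (h1 : u < 1) : 0 ≤ -Real.log (1 - u) := by
  have : Real.log (1 - u) ≤ 0 := Real.log_nonpos (by linarith) (by linarith)
  linarith

lemma g_nonneg {β u : ℝ} (h0 : 0 ≤ u) (h1 : u < 1) : 0 ≤ g β u :=
  Real.rpow_nonneg (neglog_nonneg h0 h1) β

lemma g_zero {β : ℝ} (hβ : β ≠ 0) : g β 0 = 0 := by
  simp [g, Real.zero_rpow hβ]

lemma g_pos {β u : ℝ} (hβ : 0 < β) (h0 : 0 < u) (h1 : u < 1) : 0 < g β u := by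
  apply Real.rpow_pos_of_pos
  have : Real.log (1 - u) < 0 := Real.log_neg (by linarith) (by linarith)
  linarith

lemma g_mono {β u u' : ℝ} (hβ : 0 ≤ β) (h0 : 0 ≤ u) (huu : u ≤ u') (h1 : u' < 1) :
    g β u ≤ g β u' := by
  apply Real.rpow_le_rpow (neglog_nonneg h0 (lt_of_le_of_lt huu h1)) _ hβ
  have : Real.log (1 - u') ≤ Real.log (1 - u) := Real.log_le_log (by linarith) (by linarith)
  linarith

lemma pinv_cdf (α : ℝ) (hα : 0 < α) (m : Measure ℝ)
    (hcdf : ∀ x : ℝ, cdfOf m x = if 0 < x then 1 - Real.exp (-(x ^ α)) else 0)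
    {v : ℝ} (hv : v ∈ Ioo (0:ℝ) 1) : pinv (cdfOf m) v = g (1/α) v := by
  obtain ⟨hv0, hv1⟩ := hv
  have hgpos : 0 < g (1/α) v := g_pos (by positivity) hv0 hv1
  have hset : {x | v ≤ cdfOf m x} = Ici (g (1/α) v) := by
    ext x
    simp only [mem_setOf_eq, mem_Ici, hcdf x]
    rcases le_or_gt x 0 with hx | hx
    · rw [if_neg (not_lt.mpr hx)]
      constructor
      · intro h; linarith
      · intro h; linarith
    · rw [if_pos hx]
      have h1v : 0 < 1 - v := by linarith
      have hL : 0 ≤ -Real.log (1 - v) := neglog_nonneg hv0.le hv1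
      rw [show (1/α) = α⁻¹ by ring, g,
        Real.rpow_inv_le_iff_of_pos hL hx.le hα]
      constructor
      · intro h
        have h2 : Real.exp (-(x ^ α)) ≤ 1 - v := by linarith
        have := (Real.le_log_iff_exp_le h1v).mpr h2
        linarith
      · intro h
        have h2 : Real.log (1 - v) ≥ -(x ^ α) := by linarith
        have := (Real.le_log_iff_exp_le h1v).mp h2
        linarith
  rw [pinv, hset, csInf_Ici]

lemma g_continuousAt {β u : ℝ} (hβ : 0 ≤ β) (hu : u ≠ 1) : ContinuousAt (g β) u := by
  have h1 : ContinuousAt (fun u : ℝ => -Real.log (1 - u)) u := by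
    apply ContinuousAt.neg
    exact (Real.continuousAt_log (by intro h; apply hu; linarith [sub_eq_zero.mp h])).comp
      ((continuous_const.sub continuous_id).continuousAt)
  exact (Real.continuous_rpow_const hβ).continuousAt.comp h1

lemma g_measurable (β : ℝ) (hβ : 0 ≤ β) : Measurable (g β) :=
  (Real.continuous_rpow_const hβ).measurable.comp
    (Real.measurable_log.comp (measurable_const.sub measurable_id)).neg

/-- key inequality: `t ^ β ≤ T ^ β * exp ((t - T)/2)` for `2β ≤ T ≤ t`. -/
lemma rpow_le_mul_exp {β T t : ℝ} (hβ : 0 < β) (hT : 2 * β ≤ T) (ht : T ≤ t) :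
    t ^ β ≤ T ^ β * Real.exp ((t - T) / 2) := by
  have hT0 : 0 < T := by linarith
  have ht0 : 0 < t := by linarith
  have hdiv : 0 < t / T := by positivity
  have hlog : Real.log (t / T) ≤ t / T - 1 := Real.log_le_sub_one_of_pos hdiv
  have hkey : β * Real.log (t / T) ≤ (t - T) / 2 := by
    have h1 : β * Real.log (t / T) ≤ β * (t / T - 1) :=
      mul_le_mul_of_nonneg_left hlog hβ.le
    have h2 : β * (t / T - 1) = (t - T) * (β / T) := by field_simp
    have h3 : (t - T) * (β / T) ≤ (t - T) * (1 / 2) := by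
      apply mul_le_mul_of_nonneg_left _ (by linarith)
      rw [div_le_div_iff₀ hT0 (by norm_num)]
      linarith
    linarith
  have h4 : (t / T) ^ β ≤ Real.exp ((t - T) / 2) := by
    rw [Real.rpow_def_of_pos hdiv]
    exact Real.exp_le_exp.mpr (by rw [mul_comm]; exact hkey)
  calc t ^ β = T ^ β * (t / T) ^ β := by
        rw [Real.div_rpow ht0.le hT0.le, mul_div_cancel₀]
        exact (Real.rpow_pos_of_pos hT0 β).ne'
    _ ≤ T ^ β * Real.exp ((t - T) / 2) :=
        mul_le_mul_of_nonneg_left h4 (Real.rpow_nonneg hT0.le β)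

/-- tail bound: on `(1 - δ, 1)`, `g β v ≤ (-log δ)^β * δ^(1/2) * (1-v)^(-1/2)`. -/
lemma g_tail_bound {β δ v : ℝ} (hβ : 0 < β) (hδ0 : 0 < δ)
    (hδ : Real.exp (2 * β) ≤ 1/δ) (hv : 1 - δ < v) (hv1 : v < 1) :
    g β v ≤ (-Real.log δ) ^ β * δ ^ ((1:ℝ)/2) * (1 - v) ^ (-(1:ℝ)/2) := by
  set t : ℝ := -Real.log (1 - v) with htdef
  set T : ℝ := -Real.log δ with hTdef
  have h1v : 0 < 1 - v := by linarith
  have h1vδ : 1 - v < δ := by linarith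
  have hT : 2 * β ≤ T := by
    rw [hTdef, ← Real.log_inv]
    calc 2 * β = Real.log (Real.exp (2*β)) := (Real.log_exp _).symm
      _ ≤ Real.log (1/δ) := Real.log_le_log (Real.exp_pos _) hδ
      _ = Real.log δ⁻¹ := by rw [one_div]
  have htT : T ≤ t := by
    rw [htdef, hTdef, neg_le_neg_iff]
    exact Real.log_le_log h1v h1vδ.le
  have hmain := rpow_le_mul_exp hβ hT htT
  have hexp : Real.exp ((t - T) / 2) = δ ^ ((1:ℝ)/2) * (1 - v) ^ (-(1:ℝ)/2) := by
    rw [htdef, hTdef]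
    rw [show (-Real.log (1 - v) - -Real.log δ) / 2
        = Real.log δ * (1/2) + Real.log (1 - v) * (-(1/2)) by ring]
    rw [Real.exp_add, Real.exp_mul, Real.exp_mul, Real.exp_log hδ0, Real.exp_log h1v]
    rw [show (-(1:ℝ)/2) = -(1/2) by norm_num]
  rw [g, ← htdef, mul_assoc, ← hexp]
  exact hmain

lemma cdf_quant (m : Measure ℝ) (n : ℕ) (x : ℝ) :
    cdfOf (quant m n) x =
      (((Finset.Icc 1 n).filter
        (fun k : ℕ => pinv (cdfOf m) ((2 * (k : ℝ) - 1) / (2 * n)) ≤ x)).card : ℝ) / n := by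
  have hmeas : MeasurableSet (Iic x) := measurableSet_Iic
  rw [cdfOf, quant, Measure.smul_apply, Measure.finset_sum_apply]
  have : ∀ k ∈ Finset.Icc 1 n,
      Measure.dirac (pinv (cdfOf m) ((2 * (k : ℝ) - 1) / (2 * n))) (Iic x)
        = if pinv (cdfOf m) ((2 * (k : ℝ) - 1) / (2 * n)) ≤ x then 1 else 0 := by
    intro k _
    rw [Measure.dirac_apply' _ hmeas]
    simp [Set.indicator_apply, Set.mem_Iic]
  rw [Finset.sum_congr rfl this, Finset.sum_boole]
  simp only [smul_eq_mul, ENNReal.toReal_mul, ENNReal.toReal_inv, ENNReal.toReal_natCast]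
  rw [inv_mul_eq_div]


lemma pinv_quant (α : ℝ) (hα : 0 < α) (m : Measure ℝ)
    (hcdf : ∀ x : ℝ, cdfOf m x = if 0 < x then 1 - Real.exp (-(x ^ α)) else 0)
    (n : ℕ) (hn : 1 ≤ n) {v : ℝ} (hv : v ∈ Ioo (0:ℝ) 1) :
    pinv (cdfOf (quant m n)) v
      = g (1/α) ((2 * ((⌈v * n⌉₊ : ℕ) : ℝ) - 1) / (2 * n)) := by
  obtain ⟨hv0, hv1⟩ := hv
  have hβ : 0 < 1/α := by positivity
  have hn0 : (0:ℝ) < n := by exact_mod_cast hn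
  set c : ℕ → ℝ := fun k => (2 * (k:ℝ) - 1) / (2 * n) with hc
  have hc0 : ∀ k : ℕ, 1 ≤ k → 0 ≤ c k := by
    intro k hk
    have : (1:ℝ) ≤ k := by exact_mod_cast hk
    apply div_nonneg (by linarith) (by positivity)
  have hc1 : ∀ k : ℕ, k ≤ n → c k < 1 := by
    intro k hk
    have : (k:ℝ) ≤ n := by exact_mod_cast hk
    rw [hc, div_lt_one (by positivity)]
    linarith
  have hmono : ∀ j k : ℕ, 1 ≤ j → j ≤ k → k ≤ n → g (1/α) (c j) ≤ g (1/α) (c k) := by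
    intro j k hj hjk hkn
    have hjk' : (j:ℝ) ≤ k := by exact_mod_cast hjk
    exact g_mono hβ.le (hc0 j hj)
      (div_le_div_of_nonneg_right (by linarith) (by positivity)) (hc1 k hkn)
  set K : ℕ := ⌈v * n⌉₊ with hK
  have hvn0 : 0 < v * n := by positivity
  have hK1 : 1 ≤ K := Nat.one_le_ceil_iff.mpr hvn0
  have hKn : K ≤ n := Nat.ceil_le.mpr (by nlinarith [hv1, hn0])
  have hKv : v * n ≤ K := Nat.le_ceil _
  -- rewrite the cdf of quant using the explicit quantile values
  have hcdfq : ∀ x : ℝ, cdfOf (quant m n) x =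
      (((Finset.Icc 1 n).filter (fun k : ℕ => g (1/α) (c k) ≤ x)).card : ℝ) / n := by
    intro x
    rw [cdf_quant m n x]
    congr 2
    apply congrArg
    apply Finset.filter_congr
    intro k hk
    obtain ⟨hk1, hkn⟩ := Finset.mem_Icc.mp hk
    have hck : c k ∈ Ioo (0:ℝ) 1 := by
      refine ⟨?_, hc1 k hkn⟩
      have : (1:ℝ) ≤ k := by exact_mod_cast hk1
      apply div_pos (by linarith) (by positivity)
    rw [pinv_cdf α hα m hcdf hck]
  have hset : {x | v ≤ cdfOf (quant m n) x} = Ici (g (1/α) (c K)) := by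
    ext x
    simp only [mem_setOf_eq, mem_Ici, hcdfq x]
    rw [le_div_iff₀ hn0, ← Nat.ceil_le]
    constructor
    · intro h
      by_contra hx
      have hsub : (Finset.Icc 1 n).filter (fun k : ℕ => g (1/α) (c k) ≤ x)
          ⊆ Finset.Icc 1 (K - 1) := by
        intro j hj
        obtain ⟨hjm, hjx⟩ := Finset.mem_filter.mp hj
        obtain ⟨hj1, hjn⟩ := Finset.mem_Icc.mp hjm
        rw [Finset.mem_Icc]
        refine ⟨hj1, ?_⟩
        by_contra hjK
        have hKj : K ≤ j := by omega
        exact hx (le_trans (hmono K j hK1 hKj hjn) hjx)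
      have hcard := Finset.card_le_card hsub
      rw [Nat.card_Icc] at hcard
      omega
    · intro h
      have hsub : Finset.Icc 1 K ⊆ (Finset.Icc 1 n).filter (fun k : ℕ => g (1/α) (c k) ≤ x) := by
        intro j hj
        obtain ⟨hj1, hjK⟩ := Finset.mem_Icc.mp hj
        exact Finset.mem_filter.mpr ⟨Finset.mem_Icc.mpr ⟨hj1, le_trans hjK hKn⟩,
          le_trans (hmono j K hj1 hjK hKn) h⟩
      have hcard := Finset.card_le_card hsub
      rwa [Nat.card_Icc, Nat.add_sub_cancel] at hcard
  rw [pinv, hset, csInf_Ici]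


lemma pointwise_bound {β : ℝ} (hβ : 0 < β) (n : ℕ) (hn : 1 ≤ n) {v : ℝ}
    (hv : v ∈ Ioo (0:ℝ) 1) :
    |g β v - g β ((2 * ((⌈v * (n:ℝ)⌉₊ : ℕ) : ℝ) - 1) / (2 * n))| ≤
      (g β (min (v + 1/n) (1 - 1/(2*n))) - g β (max (v - 1/n) 0))
        + (Ioo (1 - 1/(2*(n:ℝ))) 1).indicator (g β) v := by
  obtain ⟨hv0, hv1⟩ := hv
  have hn0 : (0:ℝ) < n := by exact_mod_cast hn
  have h2n : (0:ℝ) < 2*n := by linarith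
  set cn : ℝ := 1 - 1/(2*(n:ℝ)) with hcn
  set K : ℕ := ⌈v * (n:ℝ)⌉₊ with hKdef
  set cK : ℝ := (2 * (K : ℝ) - 1) / (2 * n) with hcKdef
  have hvn0 : 0 < v * n := by positivity
  have hK1 : 1 ≤ K := Nat.one_le_ceil_iff.mpr hvn0
  have hK1' : (1:ℝ) ≤ K := by exact_mod_cast hK1
  have hKn : K ≤ n := Nat.ceil_le.mpr (by nlinarith)
  have hKn' : (K:ℝ) ≤ n := by exact_mod_cast hKn
  have hKv : v * n ≤ K := Nat.le_ceil _
  have hKv' : (K:ℝ) < v * n + 1 := Nat.ceil_lt_add_one hvn0.le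
  have hinvn : 0 < 1/(n:ℝ) := by positivity
  have hinv2n : 0 < 1/(2*(n:ℝ)) := by positivity
  have hhalf : 1/(2*(n:ℝ)) ≤ 1/(n:ℝ) := by
    apply div_le_div_of_nonneg_left (by norm_num) hn0; linarith
  have hcn1 : cn < 1 := by rw [hcn]; linarith
  have hcn0 : 0 ≤ cn := by
    rw [hcn]; have : 1/(2*(n:ℝ)) ≤ 1/2 := by
      apply div_le_div_of_nonneg_left (by norm_num) (by norm_num); linarith
    linarith
  have hcK_ub : cK ≤ v + 1/(2*n) := by
    rw [hcKdef, div_le_iff₀ h2n]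
    have : (v + 1/(2*n)) * (2*n) = v * n * 2 + 1 := by field_simp
    rw [this]; linarith
  have hcK_lb : v - 1/(2*n) ≤ cK := by
    rw [hcKdef, le_div_iff₀ h2n]
    have : (v - 1/(2*n)) * (2*n) = v * n * 2 - 1 := by field_simp
    rw [this]; linarith
  have hcK0 : 0 ≤ cK := by
    apply div_nonneg (by linarith) h2n.le
  have hcKcn : cK ≤ cn := by
    rw [hcKdef, hcn]
    have h1 : (1:ℝ) - 1/(2*n) = (2*n - 1)/(2*n) := by field_simp
    rw [h1]
    apply div_le_div_of_nonneg_right (by linarith) h2n.le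
  set lo : ℝ := max (v - 1/n) 0 with hlodef
  set hi : ℝ := min (v + 1/n) cn with hhidef
  have hlo0 : 0 ≤ lo := le_max_right _ _
  have hlohi : lo ≤ hi := by
    apply max_le (le_min (by linarith) (by rw [hcn]; linarith)) (le_min (by linarith) hcn0)
  have hhi1 : hi < 1 := lt_of_le_of_lt (min_le_right _ _) hcn1
  by_cases hcase : v ≤ cn
  · rw [indicator_of_notMem (by simp only [mem_Ioo, not_and_or, not_lt]; exact Or.inl hcase),
      add_zero]
    have hlov : lo ≤ v := max_le (by linarith) hv0.le
    have hvhi : v ≤ hi := le_min (by linarith) hcase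
    have hlocK : lo ≤ cK := max_le (by linarith) hcK0
    have hcKhi : cK ≤ hi := le_min (by linarith) hcKcn
    have h1 := g_mono (β := β) hβ.le hlo0 hlov hv1
    have h2 := g_mono (β := β) hβ.le (hlo0.trans hlov) hvhi hhi1
    have h3 := g_mono (β := β) hβ.le hlo0 hlocK (lt_of_le_of_lt hcKcn hcn1)
    have h4 := g_mono (β := β) hβ.le hcK0 hcKhi hhi1
    rw [abs_sub_le_iff]
    constructor <;> linarith
  · push_neg at hcase
    rw [indicator_of_mem (show v ∈ Ioo cn 1 from ⟨hcase, hv1⟩) (g β)]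
    have hKeqn : K = n := by
      have hlb : (n:ℝ) - 1/2 < v * n := by
        have h8 : (1 - 1/(2*(n:ℝ))) * n = n - 1/2 := by field_simp
        have h7 : (1 - 1/(2*(n:ℝ))) * n < v * n :=
          mul_lt_mul_of_pos_right (hcn ▸ hcase) hn0
        linarith
      by_contra h
      have : K + 1 ≤ n := by omega
      have : (K:ℝ) + 1 ≤ n := by exact_mod_cast this
      linarith
    have hcKcn' : cK = cn := by
      rw [hcKdef, hKeqn, hcn]; field_simp; try ring
    rw [hcKcn']
    have hgv : g β cn ≤ g β v := g_mono hβ.le hcn0 hcase.le hv1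
    rw [abs_of_nonneg (by linarith)]
    have h5 := g_mono (β := β) hβ.le hlo0 hlohi hhi1
    have h6 := g_nonneg (β := β) hcn0 hcn1
    linarith

lemma integral_facts {β : ℝ} (hβ : 0 < β) (n : ℕ) (hn : 2 ≤ n)
    (hexp : Real.exp (2 * β) ≤ 2 * n) :
    Integrable (fun v =>
      (g β (min (v + 1/n) (1 - 1/(2*n))) - g β (max (v - 1/n) 0))
        + (Ioo (1 - 1/(2*(n:ℝ))) 1).indicator (g β) v)
      (volume.restrict (Ioo (0:ℝ) 1)) ∧
    (∫ v in Ioo (0:ℝ) 1,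
      ((g β (min (v + 1/(n:ℝ)) (1 - 1/(2*n))) - g β (max (v - 1/n) 0))
        + (Ioo (1 - 1/(2*(n:ℝ))) 1).indicator (g β) v))
      ≤ 3 * Real.log (2*n) ^ β / n := by
  have hn0 : (0:ℝ) < n := by positivity
  have hn2 : (2:ℝ) ≤ n := by exact_mod_cast hn
  set δ : ℝ := 1/(2*(n:ℝ)) with hδdef
  set cn : ℝ := 1 - 1/(2*(n:ℝ)) with hcn
  have hδ0 : 0 < δ := by positivity
  have hδ4 : δ ≤ 1/4 := by
    rw [hδdef]
    apply div_le_div_of_nonneg_left (by norm_num) (by norm_num)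
    linarith
  have hcn0 : (0:ℝ) ≤ cn := by rw [hcn]; linarith
  have hcn1 : cn < 1 := by rw [hcn]; linarith
  have hinvn : (0:ℝ) < 1/n := by positivity
  have hinvn2 : (1:ℝ)/n ≤ 1/2 := by
    rw [div_le_div_iff₀ hn0 (by norm_num)]; linarith
  have hlog2n : -Real.log δ = Real.log (2*(n:ℝ)) := by
    rw [hδdef, one_div, Real.log_inv, neg_neg]
  have h1cn : (1:ℝ) - cn = δ := by rw [hcn, hδdef]; ring
  have hgcn : g β cn = Real.log (2*(n:ℝ)) ^ β := by
    rw [g, h1cn, hlog2n]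
  -- the tail bound function
  set hfun : ℝ → ℝ := fun v => Real.log (2*n) ^ β * δ ^ ((1:ℝ)/2) * (1 - v) ^ (-(1:ℝ)/2)
    with hhfun
  have htail : ∀ v ∈ Ioo cn 1, g β v ≤ hfun v := by
    intro v hv
    have := g_tail_bound hβ hδ0 (by rw [hδdef, one_div, one_div, inv_inv]; exact hexp)
      (by rw [hcn] at hv; exact hv.1) hv.2
    rwa [hlog2n] at this
  -- integrability of (1-v)^(-1/2) on [cn, 1]
  have hrpow_int : IntervalIntegrable (fun v : ℝ => (1 - v) ^ (-(1:ℝ)/2)) volume cn 1 := by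
    have base : IntervalIntegrable (fun x : ℝ => x ^ (-(1:ℝ)/2)) volume 0 δ :=
      intervalIntegral.intervalIntegrable_rpow' (by norm_num)
    have comp := base.comp_sub_left 1
    rw [sub_zero] at comp
    rw [show (1:ℝ) - δ = cn by rw [hcn, hδdef]] at comp
    exact comp.symm
  have hrpow_val : (∫ v in cn..1, (1 - v) ^ (-(1:ℝ)/2)) = 2 * δ ^ ((1:ℝ)/2) := by
    rw [intervalIntegral.integral_comp_sub_left (fun x : ℝ => x ^ (-(1:ℝ)/2)) 1]
    rw [sub_self, h1cn]
    rw [integral_rpow (Or.inl (by norm_num))]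
    rw [Real.zero_rpow (by norm_num)]
    norm_num
    ring
  -- tail integrability and value
  have hmeasIoo : MeasurableSet (Ioo cn (1:ℝ)) := measurableSet_Ioo
  have hsub : Ioo cn 1 ⊆ Ioo (0:ℝ) 1 := fun v hv => ⟨lt_of_le_of_lt hcn0 hv.1, hv.2⟩
  have hfun_intOn : IntegrableOn hfun (Ioo cn 1) volume := by
    have h1 : IntegrableOn (fun v : ℝ => (1 - v) ^ (-(1:ℝ)/2)) (Ioo cn 1) volume :=
      ((intervalIntegrable_iff_integrableOn_Ioc_of_le hcn1.le).mp hrpow_int).mono_set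
        Ioo_subset_Ioc_self
    exact h1.const_mul _
  have hg_intOn : IntegrableOn (g β) (Ioo cn 1) volume := by
    apply Integrable.mono' hfun_intOn ((g_measurable β hβ.le).aestronglyMeasurable)
    refine (ae_restrict_iff' hmeasIoo).mpr (ae_of_all _ ?_)
    intro v hv
    rw [Real.norm_eq_abs, abs_of_nonneg (g_nonneg (le_trans hcn0 hv.1.le) hv.2)]
    exact htail v hv
  have hind_integrable : Integrable ((Ioo cn 1).indicator (g β))
      (volume.restrict (Ioo (0:ℝ) 1)) :=
    (hg_intOn.integrable_indicator hmeasIoo).integrableOn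
  have hind_val : (∫ v in Ioo (0:ℝ) 1, (Ioo cn 1).indicator (g β) v)
      ≤ Real.log (2*(n:ℝ)) ^ β / n := by
    rw [setIntegral_indicator hmeasIoo, inter_eq_right.mpr hsub]
    have h1 : (∫ v in Ioo cn 1, g β v) ≤ ∫ v in Ioo cn 1, hfun v := by
      apply integral_mono_of_nonneg
      · exact (ae_restrict_iff' hmeasIoo).mpr
          (ae_of_all _ fun v hv => g_nonneg (le_trans hcn0 hv.1.le) hv.2)
      · exact hfun_intOn
      · exact (ae_restrict_iff' hmeasIoo).mpr (ae_of_all _ htail)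
    have h2 : (∫ v in Ioo cn 1, hfun v) = Real.log (2*(n:ℝ)) ^ β / n := by
      simp only [hhfun]
      rw [MeasureTheory.integral_const_mul, ← integral_Ioc_eq_integral_Ioo,
        ← intervalIntegral.integral_of_le hcn1.le, hrpow_val]
      have hδδ : δ ^ ((1:ℝ)/2) * δ ^ ((1:ℝ)/2) = δ := by
        rw [← Real.rpow_add hδ0]; norm_num
      rw [show Real.log (2*(n:ℝ))^β * δ^((1:ℝ)/2) * (2*δ^((1:ℝ)/2))
          = Real.log (2*(n:ℝ))^β * (δ^((1:ℝ)/2) * δ^((1:ℝ)/2)) * 2 by ring, hδδ, hδdef]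
      field_simp
    linarith
  -- the A part
  have hn_le_cn : 1/(n:ℝ) ≤ cn := by rw [hcn]; rw [hδdef] at hδ4; linarith
  set Gm : ℝ → ℝ := fun u => g β (min u cn) with hGm
  have hGmcont : Continuous Gm := by
    rw [continuous_iff_continuousAt]
    intro u
    have hinner : ContinuousAt (fun u : ℝ => min u cn) u :=
      (continuous_id.min continuous_const).continuousAt
    exact ContinuousAt.comp (x := u)
      (g_continuousAt hβ.le (ne_of_lt (lt_of_le_of_lt (min_le_right u cn) hcn1))) hinner
  have hA_int : IntegrableOn (fun v : ℝ => g β (min (v + 1/(n:ℝ)) cn)) (Ioo 0 1) volume :=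
    ((hGmcont.comp (continuous_id.add continuous_const)).integrableOn_Icc (a := 0)
      (b := 1)).mono_set Ioo_subset_Icc_self
  have hA_val : (∫ v in Ioo (0:ℝ) 1, g β (min (v + 1/(n:ℝ)) cn))
      = (∫ u in (1/(n:ℝ))..cn, g β u) + (3*δ) * g β cn := by
    rw [← integral_Ioc_eq_integral_Ioo, ← intervalIntegral.integral_of_le zero_le_one]
    rw [show (∫ v in (0:ℝ)..1, g β (min (v + 1/(n:ℝ)) cn))
        = ∫ v in (0:ℝ)..1, Gm (v + 1/(n:ℝ)) from rfl]
    rw [intervalIntegral.integral_comp_add_right Gm (1/(n:ℝ)), zero_add]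
    rw [← intervalIntegral.integral_add_adjacent_intervals
      (a := 1/(n:ℝ)) (b := cn) (c := 1 + 1/(n:ℝ)) (μ := volume)
      (hGmcont.intervalIntegrable _ _) (hGmcont.intervalIntegrable _ _)]
    congr 1
    · apply intervalIntegral.integral_congr
      intro u hu
      rw [uIcc_of_le hn_le_cn] at hu
      simp only [hGm, min_eq_left hu.2]
    · have heq : ∀ u ∈ uIcc cn (1 + 1/(n:ℝ)), Gm u = g β cn := by
        intro u hu
        rw [uIcc_of_le (by linarith)] at hu
        simp only [hGm, min_eq_right hu.1]
      rw [intervalIntegral.integral_congr heq, intervalIntegral.integral_const, smul_eq_mul]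
      congr 1
      rw [hcn, hδdef]; ring
  -- the B part
  have hGp_ca : ∀ u : ℝ, u < 1 → ContinuousAt (fun u : ℝ => g β (max u 0)) u := by
    intro u hu
    have hinner : ContinuousAt (fun u : ℝ => max u 0) u :=
      (continuous_id.max continuous_const).continuousAt
    have houter : ContinuousAt (g β) (max u 0) :=
      g_continuousAt hβ.le (ne_of_lt (max_lt hu zero_lt_one))
    exact ContinuousAt.comp (x := u) houter hinner
  have hB_int : IntegrableOn (fun v : ℝ => g β (max (v - 1/(n:ℝ)) 0)) (Ioo 0 1) volume := by
    refine (ContinuousOn.integrableOn_Icc (a := 0) (b := 1) ?_).mono_set Ioo_subset_Icc_self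
    intro v hv
    have h1 : v - 1/(n:ℝ) < 1 := by have := hv.2; simp only [mem_Icc] at hv; linarith [hv.2]
    have hinner : ContinuousAt (fun v : ℝ => v - 1/(n:ℝ)) v :=
      (continuous_id.sub continuous_const).continuousAt
    exact (ContinuousAt.comp (x := v) (hGp_ca _ h1) hinner).continuousWithinAt
  have hB_val : (∫ v in Ioo (0:ℝ) 1, g β (max (v - 1/(n:ℝ)) 0))
      = ∫ u in (0:ℝ)..(1 - 1/(n:ℝ)), g β u := by
    rw [← integral_Ioc_eq_integral_Ioo, ← intervalIntegral.integral_of_le zero_le_one]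
    have h1 : (∫ v in (0:ℝ)..1, g β (max (v - 1/(n:ℝ)) 0))
        = ∫ v in (0:ℝ)..1, (fun u : ℝ => g β (max u 0)) (v + -(1/(n:ℝ))) := by
      apply intervalIntegral.integral_congr
      intro u _
      simp only [sub_eq_add_neg]
    rw [h1, intervalIntegral.integral_comp_add_right (fun u : ℝ => g β (max u 0)) (-(1/(n:ℝ)))]
    have hGpIcont : ∀ a b : ℝ, b ≤ 1 - 1/(n:ℝ) → a ≤ b →
        IntervalIntegrable (fun u : ℝ => g β (max u 0)) volume a b := by
      intro a b hb hab
      apply ContinuousOn.intervalIntegrable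
      intro u hu
      rw [uIcc_of_le hab] at hu
      exact (hGp_ca u (by have := hu.2; linarith)).continuousWithinAt
    rw [← intervalIntegral.integral_add_adjacent_intervals
      (a := 0 + -(1/(n:ℝ))) (b := (0:ℝ)) (c := 1 + -(1/(n:ℝ))) (μ := volume)
      (hGpIcont _ _ (by linarith) (by linarith))
      (hGpIcont _ _ (by linarith) (by linarith))]
    have hfirst : (∫ u in (0 + -(1/(n:ℝ)))..(0:ℝ), (fun u : ℝ => g β (max u 0)) u) = 0 := by
      have heq : ∀ u ∈ uIcc (0 + -(1/(n:ℝ))) (0:ℝ), g β (max u 0) = 0 := by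
        intro u hu
        rw [uIcc_of_le (by linarith)] at hu
        rw [max_eq_right hu.2, g_zero hβ.ne']
      rw [intervalIntegral.integral_congr heq, intervalIntegral.integral_zero]
    have hsecond : (∫ u in (0:ℝ)..(1 + -(1/(n:ℝ))), (fun u : ℝ => g β (max u 0)) u)
        = ∫ u in (0:ℝ)..(1 - 1/(n:ℝ)), g β u := by
      rw [show (1:ℝ) + -(1/(n:ℝ)) = 1 - 1/(n:ℝ) by ring]
      apply intervalIntegral.integral_congr
      intro u hu
      rw [uIcc_of_le (by linarith)] at hu
      simp only [max_eq_left hu.1]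
    rw [hfirst, hsecond, zero_add]
  -- splitting interval integrals of g
  have hgInt : ∀ a b : ℝ, a ≤ cn → b ≤ cn → IntervalIntegrable (g β) volume a b := by
    intro a b ha hb
    apply ContinuousOn.intervalIntegrable
    intro u hu
    have hu1 : u < 1 := lt_of_le_of_lt (le_trans hu.2 (max_le ha hb)) hcn1
    exact (g_continuousAt hβ.le (ne_of_lt hu1)).continuousWithinAt
  have h1n_cn : 1 - 1/(n:ℝ) ≤ cn := by
    rw [hcn]
    have : 1/(2*(n:ℝ)) ≤ 1/n := by rw [div_le_div_iff₀ (by positivity) hn0]; linarith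
    linarith
  have hsplit1 : (∫ u in (0:ℝ)..(1 - 1/(n:ℝ)), g β u)
      = (∫ u in (0:ℝ)..(1/(n:ℝ)), g β u) + ∫ u in (1/(n:ℝ))..(1 - 1/(n:ℝ)), g β u :=
    (intervalIntegral.integral_add_adjacent_intervals
      (hgInt _ _ (by linarith) hn_le_cn) (hgInt _ _ hn_le_cn h1n_cn)).symm
  have hsplit2 : (∫ u in (1/(n:ℝ))..cn, g β u)
      = (∫ u in (1/(n:ℝ))..(1 - 1/(n:ℝ)), g β u) + ∫ u in (1 - 1/(n:ℝ))..cn, g β u :=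
    (intervalIntegral.integral_add_adjacent_intervals
      (hgInt _ _ hn_le_cn h1n_cn) (hgInt _ _ h1n_cn le_rfl)).symm
  have hup : (∫ u in (1 - 1/(n:ℝ))..cn, g β u) ≤ δ * g β cn := by
    have hmono' : ∀ x ∈ Icc (1 - 1/(n:ℝ)) cn, g β x ≤ g β cn := by
      intro x hx
      exact g_mono hβ.le (by linarith [hx.1]) hx.2 hcn1
    calc (∫ u in (1 - 1/(n:ℝ))..cn, g β u) ≤ ∫ _ in (1 - 1/(n:ℝ))..cn, g β cn :=
          intervalIntegral.integral_mono_on h1n_cn (hgInt _ _ h1n_cn le_rfl)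
            intervalIntegrable_const hmono'
      _ = (cn - (1 - 1/(n:ℝ))) * g β cn := by
          rw [intervalIntegral.integral_const, smul_eq_mul]
      _ = δ * g β cn := by rw [hcn, hδdef]; ring_nf
  have hlow : 0 ≤ ∫ u in (0:ℝ)..(1/(n:ℝ)), g β u :=
    intervalIntegral.integral_nonneg (by positivity)
      (fun u hu => g_nonneg hu.1 (lt_of_le_of_lt hu.2 (by linarith)))
  -- combine everything
  have hAB_int : Integrable
      (fun v => g β (min (v + 1/(n:ℝ)) cn) - g β (max (v - 1/(n:ℝ)) 0))
      (volume.restrict (Ioo (0:ℝ) 1)) := hA_int.sub hB_int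
  refine ⟨hAB_int.add hind_integrable, ?_⟩
  rw [integral_add hAB_int hind_integrable, integral_sub hA_int hB_int, hA_val, hB_val,
    hsplit1, hsplit2]
  have hgcn0 : 0 ≤ g β cn := g_nonneg hcn0 hcn1
  have hprod : (3*δ) * g β cn + δ * g β cn + Real.log (2*(n:ℝ))^β / n
      = 3 * Real.log (2*(n:ℝ))^β / n := by
    rw [hgcn, hδdef]; field_simp; ring
  linarith

end Stmt14Aux

open Stmt14Aux in
theorem stmt14 (α : ℝ) (hα : 0 < α) (m : Measure ℝ) [IsProbabilityMeasure m]
    (hcdf : ∀ x : ℝ, cdfOf m x = if 0 < x then 1 - Real.exp (-(x ^ α)) else 0) :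
    ∃ C : ℝ, ∀ᶠ n : ℕ in atTop,
      W1 m (quant m n) ≤ C * (Real.log n) ^ (1 / α) / n := by
  have hβ : 0 < 1/α := by positivity
  refine ⟨3 * (2:ℝ) ^ (1/α), ?_⟩
  have h2 : ∀ᶠ n : ℕ in atTop, Real.exp (2 * (1/α)) ≤ 2 * (n:ℝ) := by
    have h := (tendsto_natCast_atTop_atTop (R := ℝ)).eventually_ge_atTop
      (Real.exp (2 * (1/α)))
    filter_upwards [h] with n hn
    have : (0:ℝ) ≤ n := Nat.cast_nonneg n
    linarith
  filter_upwards [eventually_ge_atTop 2, h2] with n hn2 hnexp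
  have hn1 : 1 ≤ n := by omega
  have hn0 : (0:ℝ) < n := by positivity
  have hn2' : (2:ℝ) ≤ n := by exact_mod_cast hn2
  obtain ⟨hint, hval⟩ := integral_facts hβ n hn2 hnexp
  have hW1 : W1 m (quant m n) = ∫ v in Ioo (0:ℝ) 1,
      |pinv (cdfOf m) v - pinv (cdfOf (quant m n)) v| := rfl
  have hstep1 : W1 m (quant m n) ≤ ∫ v in Ioo (0:ℝ) 1,
      ((g (1/α) (min (v + 1/n) (1 - 1/(2*n))) - g (1/α) (max (v - 1/n) 0))
        + (Ioo (1 - 1/(2*(n:ℝ))) 1).indicator (g (1/α)) v) := by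
    rw [hW1]
    apply integral_mono_of_nonneg (ae_of_all _ fun v => abs_nonneg _) hint
    refine (ae_restrict_iff' measurableSet_Ioo).mpr (ae_of_all _ ?_)
    intro v hv
    dsimp only
    rw [pinv_cdf α hα m hcdf hv, pinv_quant α hα m hcdf n hn1 hv]
    exact pointwise_bound hβ n hn1 hv
  have hstep2 : W1 m (quant m n) ≤ 3 * Real.log (2*(n:ℝ)) ^ (1/α) / n :=
    le_trans hstep1 hval
  have hlogn0 : 0 ≤ Real.log n := Real.log_nonneg (by linarith)
  have hlog2n : Real.log (2*(n:ℝ)) = Real.log 2 + Real.log n :=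
    Real.log_mul (by norm_num) hn0.ne'
  have hlog2 : Real.log 2 ≤ Real.log n := Real.log_le_log (by norm_num) hn2'
  have hmono : Real.log (2*(n:ℝ)) ^ (1/α) ≤ (2:ℝ) ^ (1/α) * Real.log n ^ (1/α) := by
    calc Real.log (2*(n:ℝ)) ^ (1/α) ≤ (2 * Real.log n) ^ (1/α) := by
          apply Real.rpow_le_rpow (Real.log_nonneg (by linarith)) _ hβ.le
          rw [hlog2n]; linarith
      _ = (2:ℝ) ^ (1/α) * Real.log n ^ (1/α) := Real.mul_rpow (by norm_num) hlogn0
  calc W1 m (quant m n) ≤ 3 * Real.log (2*(n:ℝ)) ^ (1/α) / n := hstep2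
    _ ≤ 3 * (2:ℝ) ^ (1/α) * Real.log n ^ (1/α) / n := by
        apply div_le_div_of_nonneg_right ?_ hn0.le
        nlinarith
    _ = 3 * (2:ℝ) ^ (1/α) * Real.log n ^ (1/α) / n := rfl
end

section
/- Let $Q : \{0, 1, \ldots, n\} \to \mathbb{R}$. Andrew's monotone chain algorithm, which maintains a list $L$ of indices initialized to $[1,0]$ and, for $k = 2, \ldots, n$, repeatedly removes the first element $L(1)$ of $L$ while $|L| > 1$ and $\frac{Q(k) - Q(L(1))}{k - L(1)} < \frac{Q(L(1)) - Q(L(2))}{L(1) - L(2)}$, then prepends $k$ to $L$, terminates with $L$ equal (in decreasing order) to the set of indices where the piecewise-linear interpolation of $Q$ coincides with its lower convex hull on $\{0,\ldots,n\}$. -/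
open scoped Classical

/-- One step of the Graham scan: given the current list `L` (indices in decreasing
order) and a new index `k`, repeatedly remove the first element `L(1)` while
`|L| > 1` and `(Q k - Q (L 1))/(k - L 1) < (Q (L 1) - Q (L 2))/(L 1 - L 2)`,
then prepend `k`. -/
noncomputable def scanStep (Q : ℕ → ℝ) (k : ℕ) : List ℕ → List ℕ
  | a :: b :: rest =>
      if (Q k - Q a) / ((k : ℝ) - a) < (Q a - Q b) / ((a : ℝ) - b) then
        scanStep Q k (b :: rest)
      else k :: a :: b :: rest
  | L => k :: L

/-- Andrew's monotone chain algorithm: starting from the list `[1, 0]`, process the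
indices `k = 2, …, n` in increasing order. -/
noncomputable def andrew (Q : ℕ → ℝ) (n : ℕ) : List ℕ :=
  (List.range' 2 (n - 1)).foldl (fun L k => scanStep Q k L) [1, 0]

/-- `k` is a vertex of the lower convex hull of `(0, Q 0), …, (n, Q n)`, i.e. the
piecewise-linear interpolation of `Q` coincides at `k` with its lower convex hull:
`Q k` lies below every chord through points `i ≤ k ≤ j` of the graph. -/
def IsHullIndex (Q : ℕ → ℝ) (n k : ℕ) : Prop :=
  k ≤ n ∧ ∀ i j : ℕ, i ≤ k → k ≤ j → j ≤ n →
    ((j : ℝ) - i) * Q k ≤ ((j : ℝ) - k) * Q i + ((k : ℝ) - i) * Q j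



noncomputable def slp (Q : ℕ → ℝ) (i j : ℕ) : ℝ := (Q j - Q i) / ((j : ℝ) - (i : ℝ))

def blw (Q : ℕ → ℝ) (i k j : ℕ) : Prop :=
  ((j : ℝ) - i) * Q k ≤ ((j : ℝ) - k) * Q i + ((k : ℝ) - i) * Q j

lemma csub_pos {i j : ℕ} (h : i < j) : (0:ℝ) < (j:ℝ) - i := by
  have : (i:ℝ) < j := by exact_mod_cast h
  linarith

lemma blw_iff₁ {Q : ℕ → ℝ} {i k j : ℕ} (h1 : i < k) (h2 : k < j) :
    blw Q i k j ↔ slp Q i k ≤ slp Q k j := by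
  unfold blw slp
  rw [div_le_div_iff₀ (csub_pos h1) (csub_pos h2)]
  constructor <;> intro h <;> nlinarith [h]

lemma blw_iff₂ {Q : ℕ → ℝ} {i k j : ℕ} (h1 : i < k) (h2 : k < j) :
    blw Q i k j ↔ slp Q i j ≤ slp Q k j := by
  unfold blw slp
  rw [div_le_div_iff₀ (csub_pos (h1.trans h2)) (csub_pos h2)]
  constructor <;> intro h <;> nlinarith [h]

lemma blw_iff₃ {Q : ℕ → ℝ} {i k j : ℕ} (h1 : i < k) (h2 : k < j) :
    blw Q i k j ↔ slp Q i k ≤ slp Q i j := by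
  unfold blw slp
  rw [div_le_div_iff₀ (csub_pos h1) (csub_pos (h1.trans h2))]
  constructor <;> intro h <;> nlinarith [h]

lemma blw_left (Q : ℕ → ℝ) (k j : ℕ) : blw Q k k j := by unfold blw; exact le_of_eq (by ring)

lemma blw_right (Q : ℕ → ℝ) (i j : ℕ) : blw Q i j j := by unfold blw; exact le_of_eq (by ring)

lemma hull_zero (Q : ℕ → ℝ) (n : ℕ) : IsHullIndex Q n 0 := by
  refine ⟨Nat.zero_le n, fun i j hi _ _ => ?_⟩
  have : i = 0 := Nat.le_zero.mp hi
  subst this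
  exact blw_left Q 0 j

lemma hull_top (Q : ℕ → ℝ) (n : ℕ) : IsHullIndex Q n n := by
  refine ⟨le_rfl, fun i j hi hj hjm => ?_⟩
  have hjn : j = n := le_antisymm hjm hj
  subst hjn
  exact blw_right Q i j

lemma hull_mono {Q : ℕ → ℝ} {m k : ℕ} (h : IsHullIndex Q (m+1) k) (hk : k ≤ m) :
    IsHullIndex Q m k :=
  ⟨hk, fun i j hi hj hjm => h.2 i j hi hj (hjm.trans (Nat.le_succ m))⟩

noncomputable def G (Q : ℕ → ℝ) (b a t : ℕ) : ℝ :=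
  ((a:ℝ) - b) * Q t - ((a:ℝ) - t) * Q b - ((t:ℝ) - b) * Q a

lemma abv_slope {Q : ℕ → ℝ} {b i a : ℕ} (h1 : b < i) (h2 : i < a) (h : 0 ≤ G Q b a i) :
    slp Q i a ≤ slp Q b a := by
  unfold slp
  rw [div_le_div_iff₀ (csub_pos h2) (csub_pos (h1.trans h2))]
  unfold G at h
  nlinarith [h]

lemma argmin_hull {Q : ℕ → ℝ} {m b a x : ℕ} (hb : IsHullIndex Q m b) (ha : IsHullIndex Q m a)
    (hba : b < a) (hbx : b ≤ x) (hxa : x ≤ a)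
    (hmin : ∀ t, b ≤ t → t ≤ a → G Q b a x ≤ G Q b a t) : IsHullIndex Q m x := by
  refine ⟨hxa.trans ha.1, ?_⟩
  intro i j hix hxj hjm
  have hab : (0:ℝ) < (a:ℝ) - b := csub_pos hba
  have key : ∀ t : ℕ, ((j:ℝ)-t) * G Q b a i + ((t:ℝ)-i) * G Q b a j - ((j:ℝ)-i) * G Q b a t
      = ((a:ℝ)-b) * (((j:ℝ)-t) * Q i + ((t:ℝ)-i) * Q j - ((j:ℝ)-i) * Q t) := by
    intro t; unfold G; ring
  have hGb : G Q b a b = 0 := by unfold G; ring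
  have hGa : G Q b a a = 0 := by unfold G; ring
  have hji : (0:ℝ) ≤ (j:ℝ) - i := by
    have : (i:ℝ) ≤ j := by exact_mod_cast hix.trans hxj
    linarith
  suffices h : ((j:ℝ)-i) * G Q b a x ≤ ((j:ℝ)-x) * G Q b a i + ((x:ℝ)-i) * G Q b a j by
    have hE : 0 ≤ ((a:ℝ)-b) * (((j:ℝ)-x) * Q i + ((x:ℝ)-i) * Q j - ((j:ℝ)-i) * Q x) := by
      rw [← key x]; linarith
    by_contra hcon
    push_neg at hcon
    have h6 : ((j:ℝ)-x) * Q i + ((x:ℝ)-i) * Q j - ((j:ℝ)-i) * Q x < 0 := by linarith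
    have := mul_pos hab (by linarith : (0:ℝ) < -(((j:ℝ)-x) * Q i + ((x:ℝ)-i) * Q j - ((j:ℝ)-i) * Q x))
    nlinarith [hE]
  obtain ⟨p, hip, hpx, h1⟩ : ∃ p : ℕ, i ≤ p ∧ p ≤ x ∧
      ((j:ℝ)-i) * G Q b a x ≤ ((j:ℝ)-p) * G Q b a i + ((p:ℝ)-i) * G Q b a j := by
    rcases le_or_gt b i with hbi | hib
    · refine ⟨i, le_rfl, hix, ?_⟩
      have h := hmin i hbi (hix.trans hxa)
      have h2 : ((j:ℝ)-i) * G Q b a x ≤ ((j:ℝ)-i) * G Q b a i :=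
        mul_le_mul_of_nonneg_left h hji
      have h3 : ((i:ℝ)-i) * G Q b a j = 0 := by ring
      linarith
    · refine ⟨b, hib.le, hbx, ?_⟩
      have hbj : ((j:ℝ)-i) * Q b ≤ ((j:ℝ)-b) * Q i + ((b:ℝ)-i) * Q j :=
        hb.2 i j hib.le (hbx.trans hxj) hjm
      have h2 : 0 ≤ ((j:ℝ)-b) * G Q b a i + ((b:ℝ)-i) * G Q b a j := by
      -- from key b, hGb
        have e := key b
        rw [hGb] at e
        nlinarith [e, mul_nonneg hab.le (by linarith :
          (0:ℝ) ≤ ((j:ℝ)-b) * Q i + ((b:ℝ)-i) * Q j - ((j:ℝ)-i) * Q b)]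
      have h3 : G Q b a x ≤ 0 := by
        have := hmin b le_rfl hba.le
        rw [hGb] at this; linarith
      nlinarith [mul_nonneg hji (neg_nonneg.2 h3)]
  obtain ⟨q, hxq, hqj, h2⟩ : ∃ q : ℕ, x ≤ q ∧ q ≤ j ∧
      ((j:ℝ)-i) * G Q b a x ≤ ((j:ℝ)-q) * G Q b a i + ((q:ℝ)-i) * G Q b a j := by
    rcases le_or_gt j a with hja | haj
    · refine ⟨j, hxj, le_rfl, ?_⟩
      have h := hmin j (hbx.trans hxj) hja
      have h2 : ((j:ℝ)-i) * G Q b a x ≤ ((j:ℝ)-i) * G Q b a j :=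
        mul_le_mul_of_nonneg_left h hji
      have h3 : ((j:ℝ)-j) * G Q b a i = 0 := by ring
      linarith
    · refine ⟨a, hxa, haj.le, ?_⟩
      have haj' : ((j:ℝ)-i) * Q a ≤ ((j:ℝ)-a) * Q i + ((a:ℝ)-i) * Q j :=
        ha.2 i j (hix.trans hxa) haj.le hjm
      have h2 : 0 ≤ ((j:ℝ)-a) * G Q b a i + ((a:ℝ)-i) * G Q b a j := by
        have e := key a
        rw [hGa] at e
        nlinarith [e, mul_nonneg hab.le (by linarith :
          (0:ℝ) ≤ ((j:ℝ)-a) * Q i + ((a:ℝ)-i) * Q j - ((j:ℝ)-i) * Q a)]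
      have h3 : G Q b a x ≤ 0 := by
        have := hmin a hba.le le_rfl
        rw [hGa] at this; linarith
      nlinarith [mul_nonneg hji (neg_nonneg.2 h3)]
  rcases eq_or_lt_of_le (hpx.trans hxq) with hpq | hpq
  · have hp : p = x := le_antisymm hpx (by omega)
    subst hp
    have h3 : ((p:ℝ)-p) * 0 = 0 := by ring
    linarith [h1]
  · have hqp : (0:ℝ) < (q:ℝ) - p := csub_pos hpq
    have hqx : (0:ℝ) ≤ (q:ℝ) - x := by
      have : (x:ℝ) ≤ q := by exact_mod_cast hxq
      linarith
    have hxp : (0:ℝ) ≤ (x:ℝ) - p := by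
      have : (p:ℝ) ≤ x := by exact_mod_cast hpx
      linarith
    have hA : ((q:ℝ)-x) * (((j:ℝ)-i) * G Q b a x - (((j:ℝ)-p) * G Q b a i + ((p:ℝ)-i) * G Q b a j)) ≤ 0 :=
      mul_nonpos_of_nonneg_of_nonpos hqx (by linarith)
    have hB : ((x:ℝ)-p) * (((j:ℝ)-i) * G Q b a x - (((j:ℝ)-q) * G Q b a i + ((q:ℝ)-i) * G Q b a j)) ≤ 0 :=
      mul_nonpos_of_nonneg_of_nonpos hxp (by linarith)
    have idt : ((q:ℝ)-p) * (((j:ℝ)-i) * G Q b a x - (((j:ℝ)-x) * G Q b a i + ((x:ℝ)-i) * G Q b a j))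
        = ((q:ℝ)-x) * (((j:ℝ)-i) * G Q b a x - (((j:ℝ)-p) * G Q b a i + ((p:ℝ)-i) * G Q b a j))
        + ((x:ℝ)-p) * (((j:ℝ)-i) * G Q b a x - (((j:ℝ)-q) * G Q b a i + ((q:ℝ)-i) * G Q b a j)) := by
      ring
    have h5 : ((q:ℝ)-p) * (((j:ℝ)-i) * G Q b a x - (((j:ℝ)-x) * G Q b a i + ((x:ℝ)-i) * G Q b a j)) ≤ 0 := by
      rw [idt]; linarith
    by_contra hcon
    push_neg at hcon
    have h6 : (0:ℝ) < ((j:ℝ)-i) * G Q b a x - (((j:ℝ)-x) * G Q b a i + ((x:ℝ)-i) * G Q b a j) := by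
      linarith
    have := mul_pos hqp h6
    linarith

lemma between_nonneg {Q : ℕ → ℝ} {m b a : ℕ} (hb : IsHullIndex Q m b) (ha : IsHullIndex Q m a)
    (hba : b < a) (hno : ∀ t, b < t → t < a → ¬ IsHullIndex Q m t) :
    ∀ x, b ≤ x → x ≤ a → 0 ≤ G Q b a x := by
  obtain ⟨w, hwmem, hwmin⟩ := (Finset.Icc b a).exists_min_image (G Q b a)
    ⟨b, Finset.mem_Icc.2 ⟨le_rfl, hba.le⟩⟩
  rw [Finset.mem_Icc] at hwmem
  have hwhull : IsHullIndex Q m w := argmin_hull hb ha hba hwmem.1 hwmem.2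
    (fun t h1 h2 => hwmin t (Finset.mem_Icc.2 ⟨h1, h2⟩))
  have hw0 : G Q b a w = 0 := by
    rcases eq_or_lt_of_le hwmem.1 with h | h
    · rw [← h]; unfold G; ring
    · rcases eq_or_lt_of_le hwmem.2 with h' | h'
      · rw [h']; unfold G; ring
      · exact absurd hwhull (hno w h h')
  intro x h1 h2
  have := hwmin x (Finset.mem_Icc.2 ⟨h1, h2⟩)
  rw [hw0] at this
  exact this



def HullInv (Q : ℕ → ℝ) (m : ℕ) (L : List ℕ) : Prop :=
  L.Chain' (· > ·) ∧ ∀ k, k ∈ L ↔ IsHullIndex Q m k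

lemma scanStep_one (Q : ℕ → ℝ) (k a : ℕ) : scanStep Q k [a] = [k, a] := by
  simp [scanStep]

lemma scanStep_pop {Q : ℕ → ℝ} {k a b : ℕ} {r : List ℕ}
    (h : (Q k - Q a) / ((k : ℝ) - a) < (Q a - Q b) / ((a : ℝ) - b)) :
    scanStep Q k (a::b::r) = scanStep Q k (b::r) := by rw [scanStep, if_pos h]

lemma scanStep_stop {Q : ℕ → ℝ} {k a b : ℕ} {r : List ℕ}
    (h : ¬ (Q k - Q a) / ((k : ℝ) - a) < (Q a - Q b) / ((a : ℝ) - b)) :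
    scanStep Q k (a::b::r) = k::a::b::r := by rw [scanStep, if_neg h]

lemma pop (Q : ℕ → ℝ) (m : ℕ) (L : List ℕ) : L.Chain' (· > ·) →
    (∀ c ∈ L, IsHullIndex Q m c) → 0 ∈ L →
    (∀ c, IsHullIndex Q m c → c ∉ L → ((∀ d ∈ L, d < c) ∧ ¬ IsHullIndex Q (m+1) c)) →
    HullInv Q (m+1) (scanStep Q (m+1) L) := by
  induction L with
  | nil => intro _ _ h0 _; simp at h0
  | cons a rest ih =>
    intro hch hmem h0 hrm
    cases rest with
    | nil =>
      have ha0 : 0 = a := by simpa using h0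
      subst ha0
      rw [scanStep_one]
      constructor
      · simp [List.Chain', List.isChain_cons_cons]
      · intro k
        constructor
        · intro hk
          rcases List.mem_cons.mp hk with rfl | hk'
          · exact hull_top Q (m+1)
          · have : k = 0 := by simpa using hk'
            subst this
            exact hull_zero Q (m+1)
        · intro hk
          by_cases hk1 : k = m+1
          · subst hk1; exact List.mem_cons_self
          · have hkm : k ≤ m := by have := hk.1; omega
            have hkmh : IsHullIndex Q m k := hull_mono hk hkm
            by_cases hk0 : k = 0
            · subst hk0; simp
            · have hknot : k ∉ [0] := by simp [hk0]
              exact absurd hk ((hrm k hkmh hknot).2)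
    | cons b rest' =>
      have hab : a > b := (List.isChain_cons_cons.mp hch).1
      have hch' : List.Chain' (· > ·) (b :: rest') := (List.isChain_cons_cons.mp hch).2
      have hpw := List.isChain_iff_pairwise.mp hch
      have hhead : ∀ d ∈ b :: rest', d < a := fun d hd => (List.pairwise_cons.mp hpw).1 d hd
      have hpw' := List.isChain_iff_pairwise.mp hch'
      have hlb : ∀ d ∈ b :: rest', d ≤ b := by
        intro d hd
        rcases List.mem_cons.mp hd with rfl | hd'
        · exact le_rfl
        · exact le_of_lt ((List.pairwise_cons.mp hpw').1 d hd')
      have ha : IsHullIndex Q m a := hmem a (List.mem_cons_self)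
      have hb : IsHullIndex Q m b := hmem b (List.mem_cons_of_mem _ (List.mem_cons_self))
      have haM : a ≤ m := ha.1
      by_cases hC : (Q (m+1) - Q a) / (((m+1 : ℕ) : ℝ) - a) < (Q a - Q b) / ((a : ℝ) - b)
      · -- pop a
        rw [scanStep_pop hC]
        apply ih hch' (fun c hc => hmem c (List.mem_cons_of_mem _ hc))
        · rcases List.mem_cons.mp h0 with h | h
          · omega
          · exact h
        · intro c hc hcnot
          by_cases hca : c = a
          · subst hca
            refine ⟨hhead, ?_⟩
            intro hhull
            have hblw : blw Q b c (m+1) := hhull.2 b (m+1) hab.le (by omega) le_rfl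
            rw [blw_iff₁ hab (by omega : c < m+1)] at hblw
            unfold slp at hblw
            push_cast at hblw hC
            linarith
          · have hcnot' : c ∉ a :: b :: rest' := by
              intro hmem'
              rcases List.mem_cons.mp hmem' with h | h
              · exact hca h
              · exact hcnot h
            have := hrm c hc hcnot'
            exact ⟨fun d hd => this.1 d (List.mem_cons_of_mem _ hd), this.2⟩
      · -- stop
        rw [scanStep_stop hC]
        have hstop : slp Q b a ≤ slp Q a (m+1) := by
          unfold slp
          push_cast
          push_cast at hC
          linarith [not_lt.mp hC]
        have hno : ∀ t, b < t → t < a → ¬ IsHullIndex Q m t := by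
          intro t ht1 ht2 hthull
          by_cases htL : t ∈ a :: b :: rest'
          · rcases List.mem_cons.mp htL with rfl | h
            · omega
            · have := hlb t h; omega
          · have := (hrm t hthull htL).1 a (List.mem_cons_self)
            omega
        have claim1 : IsHullIndex Q (m+1) a := by
          refine ⟨by omega, fun i j hi hj hjm1 => ?_⟩
          by_cases hj1 : j = m+1
          · subst hj1
            rcases eq_or_lt_of_le hi with rfl | hia
            · exact blw_left Q i (m+1)
            · have hslp : slp Q i a ≤ slp Q b a := by
                rcases lt_trichotomy i b with h | h | h
                · exact (blw_iff₂ h hab).mp (hb.2 i a h.le hab.le haM)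
                · subst h; exact le_rfl
                · exact abv_slope h hia (between_nonneg hb ha hab hno i h.le hia.le)
              exact (blw_iff₁ hia (by omega)).mpr (hslp.trans hstop)
          · exact ha.2 i j hi hj (by omega)
        have claim2 : ∀ k ∈ b :: rest', IsHullIndex Q (m+1) k := by
          intro k hk
          have hkm : IsHullIndex Q m k := hmem k (List.mem_cons_of_mem _ hk)
          have hka : k < a := hhead k hk
          have hkb : k ≤ b := hlb k hk
          refine ⟨by omega, fun i j hi hj hjm1 => ?_⟩
          by_cases hj1 : j = m+1
          · subst hj1
            rcases eq_or_lt_of_le hi with rfl | hik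
            · exact blw_left Q i (m+1)
            · have h1 : slp Q i k ≤ slp Q k a := (blw_iff₁ hik hka).mp (hkm.2 i a hi hka.le haM)
              have h2 : slp Q k a ≤ slp Q a (m+1) := by
                rcases eq_or_lt_of_le hkb with rfl | hkb'
                · exact hstop
                · exact ((blw_iff₂ hkb' hab).mp (hb.2 k a hkb hab.le haM)).trans hstop
              have h3 : slp Q k a ≤ slp Q k (m+1) :=
                (blw_iff₃ hka (by omega)).mp ((blw_iff₁ hka (by omega)).mpr h2)
              exact (blw_iff₁ hik (by omega : k < m+1)).mpr (h1.trans h3)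
          · exact hkm.2 i j hi hj (by omega)
        constructor
        · rw [List.Chain', List.isChain_cons_cons]
          exact ⟨by omega, hch⟩
        · intro k
          constructor
          · intro hk
            rcases List.mem_cons.mp hk with rfl | hk'
            · exact hull_top Q (m+1)
            · rcases List.mem_cons.mp hk' with rfl | hk''
              · exact claim1
              · exact claim2 k hk''
          · intro hk
            by_cases hk1 : k = m+1
            · subst hk1; exact List.mem_cons_self
            · have hkm : k ≤ m := by have := hk.1; omega
              have hkmh : IsHullIndex Q m k := hull_mono hk hkm
              by_cases hkL : k ∈ a :: b :: rest'
              · exact List.mem_cons_of_mem _ hkL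
              · exact absurd hk (hrm k hkmh hkL).2

lemma hull_step {Q : ℕ → ℝ} {m : ℕ} {L : List ℕ} (h : HullInv Q m L) :
    HullInv Q (m+1) (scanStep Q (m+1) L) := by
  apply pop Q m L h.1 (fun c hc => (h.2 c).1 hc) ((h.2 0).2 (hull_zero Q m))
  intro c hc hcn
  exact absurd ((h.2 c).2 hc) hcn

lemma hull_init (Q : ℕ → ℝ) : HullInv Q 1 [1, 0] := by
  constructor
  · simp [List.Chain', List.isChain_cons_cons]
  · intro k
    constructor
    · intro hk
      rcases List.mem_cons.mp hk with rfl | hk'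
      · exact hull_top Q 1
      · have : k = 0 := by simpa using hk'
        subst this
        exact hull_zero Q 1
    · intro hk
      have := hk.1
      interval_cases k <;> simp

lemma hull_main (Q : ℕ → ℝ) : ∀ m, 1 ≤ m → HullInv Q m (andrew Q m) := by
  intro m
  induction m with
  | zero => omega
  | succ m ih =>
    intro hm
    rcases Nat.lt_or_ge 1 (m+1) with h2 | h2
    · have hm1 : 1 ≤ m := by omega
      have heq : List.range' 2 (m+1-1) = List.range' 2 (m-1) ++ [m+1] := by
        have h3 : m + 1 - 1 = (m-1) + 1 := by omega
        rw [h3, List.range'_concat]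
        have h4 : 2 + 1 * (m-1) = m+1 := by omega
        rw [h4]
      unfold andrew
      rw [heq, List.foldl_append]
      simp only [List.foldl_cons, List.foldl_nil]
      exact hull_step (ih hm1)
    · have hm0 : m = 0 := by omega
      subst hm0
      unfold andrew
      simp only [Nat.sub_self, List.range'_zero, List.foldl_nil]
      exact hull_init Q

theorem stmt17 (Q : ℕ → ℝ) (n : ℕ) (hn : 1 ≤ n) :
    andrew Q n = ((Finset.range (n + 1)).filter (IsHullIndex Q n)).sort (· ≥ ·) := by
  have inv : HullInv Q n (andrew Q n) := hull_main Q n hn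
  have hpw : (andrew Q n).Pairwise (· > ·) := List.isChain_iff_pairwise.mp inv.1
  have hs : (andrew Q n).Pairwise (· ≥ ·) := hpw.imp le_of_lt
  have hnd : (andrew Q n).Nodup := hpw.imp (fun h => Nat.ne_of_gt h)
  have hrhs_sorted : List.Pairwise (· ≥ ·)
      (((Finset.range (n + 1)).filter (IsHullIndex Q n)).sort (· ≥ ·)) := Finset.pairwise_sort _ _
  have hrhs_nodup := Finset.sort_nodup ((Finset.range (n + 1)).filter (IsHullIndex Q n)) (· ≥ ·)
  have hperm : List.Perm (andrew Q n) (((Finset.range (n + 1)).filter (IsHullIndex Q n)).sort (· ≥ ·)) := by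
    apply List.perm_of_nodup_nodup_toFinset_eq hnd hrhs_nodup
    ext k
    simp only [List.mem_toFinset, inv.2 k, Finset.mem_sort, Finset.mem_filter, Finset.mem_range]
    constructor
    · intro h; exact ⟨by have := h.1; omega, h⟩
    · intro h; exact h.2
  exact List.Perm.eq_of_pairwise' hs hrhs_sorted hperm
end
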